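/- arXiv:1510.03014 — 4 statements merged into one kernel-verified Lean document; each statement's English description precedes it below -/
import Mathlib

section
/- A norm bounded sequence (x_n) in a Banach space X converges weakly to x if and only if for every subsequence (x'_n) and every Banach limit LIM, the element of X** defined by x* ↦ LIM_n(x*(x'_n)) equals the canonical image of x in X**. -/
noncomputable section
open Filter

/-- A Banach limit: positive, shift-invariant, normalized linear functional on
bounded sequences, extending the usual limit. -/
structure BanachLimit where
  toFun : BoundedContinuousFunction ℕ ℝ → ℝ
  map_add' : ∀ f g, toFun (f + g) = toFun f + toFun g
  map_smul' : ∀ (c : ℝ) f, toFun (c • f) = c * toFun f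
  pos' : ∀ f, (∀ n, 0 ≤ f n) → 0 ≤ toFun f
  shift' : ∀ f : BoundedContinuousFunction ℕ ℝ,
    toFun (f.compContinuous ⟨fun n => n + 1, continuous_of_discreteTopology⟩) = toFun f
  one' : toFun 1 = 1
  lim' : ∀ (f : BoundedContinuousFunction ℕ ℝ) (a : ℝ),
    Tendsto (fun n => f n) atTop (nhds a) → toFun f = a

/-- The bounded continuous function on `ℕ` associated with a bounded sequence. -/
def bseq (f : ℕ → ℝ) (h : ∃ C, ∀ n, |f n| ≤ C) : BoundedContinuousFunction ℕ ℝ :=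
  ⟨⟨f, continuous_of_discreteTopology⟩, by
    obtain ⟨C, hC⟩ := h
    exact ⟨C + C, fun x y => by
      rw [Real.dist_eq]
      exact (abs_sub _ _).trans (add_le_add (hC x) (hC y))⟩⟩

@[simp] lemma bseq_apply (f : ℕ → ℝ) (h : ∃ C, ∀ n, |f n| ≤ C) (n : ℕ) :
    bseq f h n = f n := rfl

namespace BLAux

lemma abs_coe_le (f : BoundedContinuousFunction ℕ ℝ) (n : ℕ) : |f n| ≤ ‖f‖ := by
  simpa [Real.norm_eq_abs] using f.norm_coe_le_norm n

/-- Cesàro averages. -/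
def ces (f : ℕ → ℝ) (n : ℕ) : ℝ := (∑ i ∈ Finset.range n, f i) / n

lemma abs_ces_le {f : ℕ → ℝ} {C : ℝ} (hC : 0 ≤ C) (h : ∀ i, |f i| ≤ C) (n : ℕ) :
    |ces f n| ≤ C := by
  rcases Nat.eq_zero_or_pos n with rfl | hn
  · simpa [ces] using hC
  · have h1 : |∑ i ∈ Finset.range n, f i| ≤ n * C := by
      calc |∑ i ∈ Finset.range n, f i| ≤ ∑ i ∈ Finset.range n, |f i| :=
            Finset.abs_sum_le_sum_abs _ _
        _ ≤ ∑ _i ∈ Finset.range n, C := Finset.sum_le_sum fun i _ => h i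
        _ = n * C := by simp [mul_comm]
    have hn' : (0:ℝ) < n := by exact_mod_cast hn
    rw [ces, abs_div, abs_of_pos hn', div_le_iff₀ hn']
    exact h1.trans_eq (mul_comm _ _)

lemma ces_abs_le (f : BoundedContinuousFunction ℕ ℝ) (n : ℕ) : |ces ⇑f n| ≤ ‖f‖ :=
  abs_ces_le (norm_nonneg f) (abs_coe_le f) n

lemma bddLe {u : ℕ → ℝ} {C : ℝ} (h : ∀ n, |u n| ≤ C) :
    IsBoundedUnder (· ≤ ·) atTop u :=
  isBoundedUnder_of ⟨C, fun n => (abs_le.1 (h n)).2⟩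

lemma bddGe {u : ℕ → ℝ} {C : ℝ} (h : ∀ n, |u n| ≤ C) :
    IsBoundedUnder (· ≥ ·) atTop u :=
  isBoundedUnder_of ⟨-C, fun n => (abs_le.1 (h n)).1⟩

lemma cobddLe {u : ℕ → ℝ} {C : ℝ} (h : ∀ n, |u n| ≤ C) :
    IsCoboundedUnder (· ≤ ·) atTop u :=
  (bddGe h).isCoboundedUnder_le

/-- Sublinear functional: limsup of Cesàro averages. -/
def p (f : BoundedContinuousFunction ℕ ℝ) : ℝ := limsup (ces ⇑f) atTop

lemma p_add (f g : BoundedContinuousFunction ℕ ℝ) : p (f + g) ≤ p f + p g := by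
  have hc : ces ⇑(f + g) = ces ⇑f + ces ⇑g := by
    funext n
    simp [ces, Finset.sum_add_distrib, add_div]
  rw [p, hc]
  exact limsup_add_le (bddGe (ces_abs_le f)) (bddLe (ces_abs_le f))
    (cobddLe (ces_abs_le g)) (bddLe (ces_abs_le g))

lemma p_smul (c : ℝ) (hc : 0 < c) (f : BoundedContinuousFunction ℕ ℝ) :
    p (c • f) = c * p f := by
  have hce : ces ⇑(c • f) = fun n => c * ces ⇑f n := by
    funext n
    simp [ces, ← Finset.mul_sum, mul_div_assoc]
  have hb : ∀ n, |c * ces ⇑f n| ≤ c * ‖f‖ := fun n => by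
    rw [abs_mul, abs_of_pos hc]
    exact mul_le_mul_of_nonneg_left (ces_abs_le f n) hc.le
  have := (OrderIso.mulLeft₀ c hc).limsup_apply (f := atTop) (u := ces ⇑f)
    (bddLe (ces_abs_le f)) (cobddLe (ces_abs_le f)) (bddLe hb) (cobddLe hb)
  rw [p, hce, p]
  exact this.symm

lemma exists_banachLimit : Nonempty BanachLimit := by
  have hp0 : p 0 = 0 := by
    have hc : ces ⇑(0 : BoundedContinuousFunction ℕ ℝ) = fun _ => (0:ℝ) := by
      funext n; simp [ces]
    rw [p, hc, limsup_const]
  obtain ⟨L, -, hub⟩ := exists_extension_of_le_sublinear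
      ((0 : BoundedContinuousFunction ℕ ℝ →ₗ[ℝ] ℝ).toPMap ⊥) p
      (fun c hc f => p_smul c hc f) p_add
      (by
        rintro ⟨f, hf⟩
        obtain rfl : f = 0 := by simpa using hf
        simp [LinearMap.toPMap, hp0])
  have cesaro : ∀ (f : BoundedContinuousFunction ℕ ℝ) (a : ℝ),
      Tendsto (fun n => f n) atTop (nhds a) → Tendsto (ces ⇑f) atTop (nhds a) := by
    intro f a hf
    have hce : ces ⇑f = fun n : ℕ => (n : ℝ)⁻¹ • ∑ i ∈ Finset.range n, f i := by
      funext n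
      simp [ces, div_eq_inv_mul]
    rw [hce]
    exact hf.cesaro
  have keylim : ∀ (f : BoundedContinuousFunction ℕ ℝ) (a : ℝ),
      Tendsto (ces ⇑f) atTop (nhds a) → L f = a := by
    intro f a hf
    have h1 : L f ≤ a := (hub f).trans_eq hf.limsup_eq
    have hneg : ces ⇑(-f) = fun n => - ces ⇑f n := by
      funext n; simp [ces, neg_div]
    have h2 : L (-f) ≤ -a := by
      refine (hub (-f)).trans_eq ?_
      rw [p, hneg]
      exact Tendsto.limsup_eq (by simpa using hf.neg)
    rw [map_neg] at h2
    linarith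
  have flim : ∀ (f : BoundedContinuousFunction ℕ ℝ) (a : ℝ),
      Tendsto (fun n => f n) atTop (nhds a) → L f = a :=
    fun f a hf => keylim f a (cesaro f a hf)
  refine ⟨⟨fun f => L f, fun f g => map_add L f g, ?_, ?_, ?_, ?_, flim⟩⟩
  · intro c f
    show L (c • f) = c * L f
    rw [map_smul]
    rfl
  · -- positivity
    intro f hf
    show (0:ℝ) ≤ L f
    have h2 : L (-f) ≤ 0 := by
      refine (hub (-f)).trans ?_
      refine limsup_le_of_le (cobddLe (ces_abs_le (-f))) (Eventually.of_forall fun n => ?_)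
      have hsum : (∑ i ∈ Finset.range n, (-f) i) ≤ 0 :=
        Finset.sum_nonpos fun i _ => by simpa using neg_nonpos.2 (hf i)
      exact div_nonpos_iff.mpr (Or.inr ⟨hsum, Nat.cast_nonneg n⟩)
    rw [map_neg] at h2
    linarith
  · -- shift invariance
    intro f
    set g := f.compContinuous (⟨fun n => n + 1, continuous_of_discreteTopology⟩ :
      C(ℕ, ℕ)) with hg
    have hgapp : ∀ n, g n = f (n + 1) := fun n => rfl
    have hsum1 : ∀ n, ces ⇑(g - f) n = (f n - f 0) / n := by
      intro n
      rw [ces]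
      congr 1
      calc ∑ i ∈ Finset.range n, (g - f) i
          = ∑ i ∈ Finset.range n, (f (i + 1) - f i) :=
            Finset.sum_congr rfl fun i _ => by simp [hgapp]
        _ = f n - f 0 := Finset.sum_range_sub _ _
    have htend : Tendsto (ces ⇑(g - f)) atTop (nhds 0) := by
      apply squeeze_zero_norm' (a := fun n : ℕ => (‖f‖ + ‖f‖) / n)
      · filter_upwards [eventually_ge_atTop 1] with n hn
        rw [hsum1 n, Real.norm_eq_abs, abs_div, Nat.abs_cast]
        have hpos : (0:ℝ) < n := by exact_mod_cast hn
        rw [div_le_div_iff₀ hpos hpos]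
        have : |f n - f 0| ≤ ‖f‖ + ‖f‖ :=
          (abs_sub _ _).trans (add_le_add (abs_coe_le f n) (abs_coe_le f 0))
        nlinarith
      · exact tendsto_const_div_atTop_nhds_zero_nat _
    have htend2 : Tendsto (ces ⇑(f - g)) atTop (nhds 0) := by
      have hcneg : ces ⇑(f - g) = fun n => - ces ⇑(g - f) n := by
        funext n
        simp only [ces, BoundedContinuousFunction.coe_sub, Pi.sub_apply, Finset.sum_sub_distrib]
        ring
      rw [hcneg]
      simpa using htend.neg
    have e1 : L (g - f) ≤ 0 := (hub _).trans_eq htend.limsup_eq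
    have e2 : L (f - g) ≤ 0 := (hub _).trans_eq htend2.limsup_eq
    rw [map_sub] at e1 e2
    show L g = L f
    linarith
  · -- normalization
    exact flim 1 1 (by simpa using (tendsto_const_nhds : Tendsto (fun _ : ℕ => (1:ℝ)) atTop _))

end BLAux

lemma BanachLimit.neg_eq (L : BanachLimit) (f : BoundedContinuousFunction ℕ ℝ) :
    L.toFun (-f) = - L.toFun f := by
  have := L.map_smul' (-1) f
  rw [neg_one_smul ℝ f] at this
  linarith

lemma BanachLimit.abs_toFun_le (L : BanachLimit) (f : BoundedContinuousFunction ℕ ℝ) :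
    |L.toFun f| ≤ ‖f‖ := by
  have h1 : 0 ≤ L.toFun (‖f‖ • 1 + -f) := by
    refine L.pos' _ fun n => ?_
    have := (abs_le.1 (BLAux.abs_coe_le f n)).2
    simp only [BoundedContinuousFunction.coe_add, BoundedContinuousFunction.coe_smul,
      BoundedContinuousFunction.coe_neg, BoundedContinuousFunction.coe_one, Pi.add_apply,
      Pi.smul_apply, Pi.neg_apply, Pi.one_apply, smul_eq_mul, mul_one]
    linarith
  have h2 : 0 ≤ L.toFun (‖f‖ • 1 + f) := by
    refine L.pos' _ fun n => ?_
    have := (abs_le.1 (BLAux.abs_coe_le f n)).1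
    simp only [BoundedContinuousFunction.coe_add, BoundedContinuousFunction.coe_smul,
      BoundedContinuousFunction.coe_one, Pi.add_apply, Pi.smul_apply, Pi.one_apply,
      smul_eq_mul, mul_one]
    linarith
  rw [L.map_add' _ _, L.map_smul' _ _, L.one', L.neg_eq] at h1
  rw [L.map_add' _ _, L.map_smul' _ _, L.one'] at h2
  rw [_root_.abs_le]
  constructor <;> linarith

section Aux

variable {X : Type*} [NormedAddCommGroup X] [NormedSpace ℝ X] [CompleteSpace X]

lemma banach_aux (x : ℕ → X) (x₀ : X) (hb : ∃ C, ∀ n, ‖x n‖ ≤ C)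
    (H : ∀ (s : ℕ → ℕ), StrictMono s → ∀ L : BanachLimit,
          ∀ xdd : StrongDual ℝ (StrongDual ℝ X),
            (∀ (φ : StrongDual ℝ X) (h : ∃ C, ∀ n, |φ (x (s n))| ≤ C),
              xdd φ = L.toFun (bseq (fun n => φ (x (s n))) h)) →
            xdd = NormedSpace.inclusionInDoubleDual ℝ X x₀)
    (φ : StrongDual ℝ X) (ε : ℝ) (hε : 0 < ε) (s : ℕ → ℕ) (hs : StrictMono s)
    (hlow : ∀ n, φ x₀ + ε ≤ φ (x (s n))) : False := by
  obtain ⟨C, hC⟩ := hb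
  obtain ⟨L⟩ := BLAux.exists_banachLimit
  have hC' : ∀ n, ‖x n‖ ≤ max C 0 := fun n => (hC n).trans (le_max_left _ _)
  have hC'0 : (0:ℝ) ≤ max C 0 := le_max_right _ _
  have bnd : ∀ (ψ : StrongDual ℝ X) (n : ℕ), |ψ (x (s n))| ≤ ‖ψ‖ * max C 0 := by
    intro ψ n
    rw [← Real.norm_eq_abs]
    exact (ψ.le_opNorm _).trans (mul_le_mul_of_nonneg_left (hC' _) (norm_nonneg ψ))
  set g : StrongDual ℝ X →ₗ[ℝ] ℝ :=
    { toFun := fun ψ => L.toFun (bseq (fun n => ψ (x (s n))) ⟨‖ψ‖ * max C 0, bnd ψ⟩)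
      map_add' := fun ψ χ => by
        rw [← L.map_add']
        congr 1
      map_smul' := fun c ψ => by
        rw [RingHom.id_apply, smul_eq_mul, ← L.map_smul']
        congr 1 } with hgdef
  have gbound : ∀ ψ, ‖g ψ‖ ≤ max C 0 * ‖ψ‖ := by
    intro ψ
    rw [Real.norm_eq_abs]
    refine (L.abs_toFun_le _).trans ?_
    rw [mul_comm (max C 0) ‖ψ‖]
    refine (BoundedContinuousFunction.norm_le (by positivity)).2 fun n => ?_
    simpa [Real.norm_eq_abs] using bnd ψ n
  set xdd := g.mkContinuous (max C 0) gbound with hxdddef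
  have hxdd : ∀ (φ' : StrongDual ℝ X) (h : ∃ C, ∀ n, |φ' (x (s n))| ≤ C),
      xdd φ' = L.toFun (bseq (fun n => φ' (x (s n))) h) := fun φ' h => rfl
  have heq := H s hs L xdd hxdd
  have hval : xdd φ = φ x₀ := by rw [heq]; rfl
  have hrfl : xdd φ = L.toFun (bseq (fun n => φ (x (s n))) ⟨‖φ‖ * max C 0, bnd φ⟩) := rfl
  have h0 : 0 ≤ L.toFun (bseq (fun n => φ (x (s n))) ⟨‖φ‖ * max C 0, bnd φ⟩
      + (-(φ x₀ + ε)) • 1) := by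
    refine L.pos' _ fun n => ?_
    simp only [BoundedContinuousFunction.coe_add, BoundedContinuousFunction.coe_smul,
      BoundedContinuousFunction.coe_one, Pi.add_apply, Pi.smul_apply, Pi.one_apply,
      smul_eq_mul, mul_one, bseq_apply]
    linarith [hlow n]
  rw [L.map_add' _ _, L.map_smul' _ _, L.one'] at h0
  linarith

end Aux

/-- A norm bounded sequence `(x n)` in a Banach space converges weakly to
`x₀` iff for every subsequence and every Banach limit `L`, the element of `X**` given by
`φ ↦ L (φ (x (s n)))ₙ` equals the canonical image of `x₀` in `X**`. -/
theorem weak_convergence_iff_banachLimit {X : Type*} [NormedAddCommGroup X]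
    [NormedSpace ℝ X] [CompleteSpace X] (x : ℕ → X) (x₀ : X)
    (hb : ∃ C, ∀ n, ‖x n‖ ≤ C) :
    (∀ φ : StrongDual ℝ X,
        Tendsto (fun n => φ (x n)) atTop (nhds (φ x₀)))
      ↔ ∀ (s : ℕ → ℕ), StrictMono s → ∀ L : BanachLimit,
          ∀ xdd : StrongDual ℝ (StrongDual ℝ X),
            (∀ (φ : StrongDual ℝ X) (h : ∃ C, ∀ n, |φ (x (s n))| ≤ C),
              xdd φ = L.toFun (bseq (fun n => φ (x (s n))) h)) →
            xdd = NormedSpace.inclusionInDoubleDual ℝ X x₀ := by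
  obtain ⟨C, hC⟩ := id hb
  constructor
  · intro h s hs L xdd hx
    ext φ
    have hbφ : ∃ C', ∀ n, |φ (x (s n))| ≤ C' := by
      refine ⟨‖φ‖ * max C 0, fun n => ?_⟩
      rw [← Real.norm_eq_abs]
      exact (φ.le_opNorm _).trans
        (mul_le_mul_of_nonneg_left ((hC _).trans (le_max_left _ _)) (norm_nonneg φ))
    rw [hx φ hbφ, NormedSpace.dual_def]
    exact L.lim' _ _ ((h φ).comp hs.tendsto_atTop)
  · intro H φ
    by_contra hne
    rw [Metric.tendsto_atTop] at hne
    push_neg at hne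
    obtain ⟨ε, hε, hN⟩ := hne
    have hfr : ∃ᶠ n in atTop, ε ≤ dist (φ (x n)) (φ x₀) := frequently_atTop.2 hN
    have hfr2 : ∃ᶠ n in atTop, (φ x₀ + ε ≤ φ (x n) ∨ φ (x n) ≤ φ x₀ - ε) := by
      refine hfr.mono fun n hn => ?_
      rw [Real.dist_eq] at hn
      rcases le_abs.1 hn with h | h
      · exact Or.inl (by linarith)
      · exact Or.inr (by linarith)
    rcases frequently_or_distrib.1 hfr2 with h | h
    · obtain ⟨s, hs, hsp⟩ := extraction_of_frequently_atTop h
      exact banach_aux x x₀ hb H φ ε hε s hs hsp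
    · obtain ⟨s, hs, hsp⟩ := extraction_of_frequently_atTop h
      refine banach_aux x x₀ hb H (-φ) ε hε s hs fun n => ?_
      have := hsp n
      simp only [ContinuousLinearMap.neg_apply]
      linarith
end
end

section
/- The space ba(𝒜) of bounded finitely additive real-valued set functions on an algebra of sets 𝒜, equipped with the total variation norm, is a Banach lattice possessing property (P): every increasing, norm bounded net in ba(𝒜) has a least upper bound to which it converges in the total variation norm. -/
noncomputable section
open Filter Set

variable {Ω : Type}

/-- `C` is an algebra of subsets of `Ω`. -/
def IsSetAlg (C : Set (Set Ω)) : Prop :=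
  ∅ ∈ C ∧ (∀ A ∈ C, Aᶜ ∈ C) ∧ ∀ A ∈ C, ∀ B ∈ C, A ∪ B ∈ C

/-- `μ` is finitely additive on the algebra `C`. -/
def IsFinAdd (C : Set (Set Ω)) (μ : Set Ω → ℝ) : Prop :=
  μ ∅ = 0 ∧ ∀ A ∈ C, ∀ B ∈ C, Disjoint A B → μ (A ∪ B) = μ A + μ B

/-- `π` is a partition of `A` into finitely many members of `C`. -/
def IsPartition (C : Set (Set Ω)) (π : Finset (Set Ω)) (A : Set Ω) : Prop :=
  (∀ E ∈ π, E ∈ C) ∧ (π : Set (Set Ω)).PairwiseDisjoint id ∧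
    ⋃₀ (π : Set (Set Ω)) = A

/-- The set of partial variation sums of `μ` over finite `C`-partitions of `A`. -/
def varSums (C : Set (Set Ω)) (μ : Set Ω → ℝ) (A : Set Ω) : Set ℝ :=
  {x | ∃ π : Finset (Set Ω), IsPartition C π A ∧ x = ∑ E ∈ π, |μ E|}

/-- The total variation `|μ|(A)`. -/
def totalVar (C : Set (Set Ω)) (μ : Set Ω → ℝ) (A : Set Ω) : ℝ :=
  sSup (varSums C μ A)

/-- The total variation norm `‖μ‖ = |μ|(Ω)`. -/
def tvNorm (C : Set (Set Ω)) (μ : Set Ω → ℝ) : ℝ :=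
  totalVar C μ univ

/-- `μ` has bounded total variation. -/
def BddVar (C : Set (Set Ω)) (μ : Set Ω → ℝ) : Prop :=
  BddAbove (varSums C μ univ)

/-- `μ ∈ ba(C)`: finitely additive with bounded total variation. -/
def Memba (C : Set (Set Ω)) (μ : Set Ω → ℝ) : Prop :=
  IsFinAdd C μ ∧ BddVar C μ

/-- The lattice infimum `μ ∧ ν` in `ba(C)`. -/
def baInf (C : Set (Set Ω)) (μ ν : Set Ω → ℝ) (A : Set Ω) : ℝ :=
  sInf {x | ∃ B ∈ C, x = μ (A ∩ B) + ν (A ∩ Bᶜ)}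

/-- `l` is a finitely additive probability on `C`. -/
def IsFAProb (C : Set (Set Ω)) (l : Set Ω → ℝ) : Prop :=
  Memba C l ∧ (∀ A ∈ C, 0 ≤ l A) ∧ l univ = 1

/-- `ξ ≪ l` : (ε-δ) absolute continuity. -/
def AbsCont (C : Set (Set Ω)) (ξ l : Set Ω → ℝ) : Prop :=
  ∀ ε > (0:ℝ), ∃ δ > (0:ℝ), ∀ A ∈ C, l A < δ → totalVar C ξ A < ε

/-- The tail sets `{F n, F (n+1), ...}` of a sequence of set functions. -/
def tailSet (F : ℕ → Set Ω → ℝ) (n : ℕ) : Set (Set Ω → ℝ) :=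
  {g | ∃ i, n ≤ i ∧ g = F i}

open scoped Classical

lemma aux_univ_mem {C : Set (Set Ω)} (hC : IsSetAlg C) : (univ : Set Ω) ∈ C := by
  have := hC.2.1 ∅ hC.1
  simpa using this

lemma aux_sUnion_mem {C : Set (Set Ω)} (hC : IsSetAlg C) (π : Finset (Set Ω))
    (h : ∀ E ∈ π, E ∈ C) : ⋃₀ (π : Set (Set Ω)) ∈ C := by
  induction π using Finset.induction_on with
  | empty => simpa using hC.1
  | @insert E π hE ih =>
    rw [Finset.coe_insert, sUnion_insert]
    exact hC.2.2 _ (h _ (Finset.mem_insert_self _ _)) _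
      (ih (fun E hE => h E (Finset.mem_insert_of_mem hE)))

lemma aux_sum_eq {C : Set (Set Ω)} (hC : IsSetAlg C) {μ : Set Ω → ℝ}
    (hμ : IsFinAdd C μ) (π : Finset (Set Ω)) (h1 : ∀ E ∈ π, E ∈ C)
    (h2 : (π : Set (Set Ω)).PairwiseDisjoint id) :
    ∑ E ∈ π, μ E = μ (⋃₀ (π : Set (Set Ω))) := by
  revert h1 h2
  induction π using Finset.induction_on with
  | empty => intro _ _; simpa using hμ.1.symm
  | @insert E π hE ih =>
    intro h1' h2
    have hEC : E ∈ C := h1' _ (Finset.mem_insert_self _ _)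
    have h1π : ∀ B ∈ π, B ∈ C := fun B hB => h1' B (Finset.mem_insert_of_mem hB)
    have h2π : (π : Set (Set Ω)).PairwiseDisjoint id := by
      apply h2.subset; rw [Finset.coe_insert]; exact subset_insert _ _
    have hdisj : Disjoint E (⋃₀ (π : Set (Set Ω))) := by
      rw [disjoint_sUnion_right]
      intro B hB
      have hne : E ≠ B := fun h => hE (h ▸ hB)
      exact h2 (by rw [Finset.coe_insert]; exact mem_insert _ _)
        (by rw [Finset.coe_insert]; exact mem_insert_of_mem _ hB) hne
    rw [Finset.sum_insert hE, Finset.coe_insert, sUnion_insert,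
      hμ.2 E hEC _ (aux_sUnion_mem hC π h1π) hdisj, ih h1π h2π]

-- varSums of nonneg finadd over univ = {μ univ}
lemma aux_nonneg_var {C : Set (Set Ω)} (hC : IsSetAlg C) {μ : Set Ω → ℝ}
    (hμ : IsFinAdd C μ) (hpos : ∀ A ∈ C, 0 ≤ μ A) :
    varSums C μ univ = {μ univ} := by
  apply Subset.antisymm
  · rintro x ⟨π, ⟨hπC, hπd, hπu⟩, rfl⟩
    have : ∑ E ∈ π, |μ E| = ∑ E ∈ π, μ E :=
      Finset.sum_congr rfl fun E hE => abs_of_nonneg (hpos E (hπC E hE))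
    rw [this, aux_sum_eq hC hμ π hπC hπd, hπu]
    rfl
  · rintro x rfl
    refine ⟨{univ}, ⟨?_, ?_, ?_⟩, ?_⟩
    · intro E hE; rw [Finset.mem_singleton] at hE; exact hE ▸ aux_univ_mem hC
    · rw [Finset.coe_singleton]; exact pairwiseDisjoint_singleton _ _
    · rw [Finset.coe_singleton]; exact sUnion_singleton _
    · rw [Finset.sum_singleton, abs_of_nonneg (hpos _ (aux_univ_mem hC))]

lemma aux_abs_le {C : Set (Set Ω)} (hC : IsSetAlg C) {μ : Set Ω → ℝ}
    (hμ : Memba C μ) {A : Set Ω} (hA : A ∈ C) : |μ A| ≤ tvNorm C μ := by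
  have hmem : ∑ E ∈ ({A, Aᶜ} : Finset (Set Ω)), |μ E| ∈ varSums C μ univ := by
    refine ⟨{A, Aᶜ}, ⟨?_, ?_, ?_⟩, rfl⟩
    · intro E hE
      rcases Finset.mem_insert.1 hE with rfl | hE
      · exact hA
      · rw [Finset.mem_singleton] at hE; exact hE ▸ hC.2.1 A hA
    · rw [Finset.coe_insert, Finset.coe_singleton]
      intro x hx y hy hxy
      rcases hx with rfl | hx
      · rcases hy with rfl | hy
        · exact absurd rfl hxy
        · rw [mem_singleton_iff] at hy; subst hy; exact disjoint_compl_right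
      · rw [mem_singleton_iff] at hx; subst hx
        rcases hy with rfl | hy
        · exact disjoint_compl_left
        · rw [mem_singleton_iff] at hy; subst hy; exact absurd rfl hxy
    · rw [Finset.coe_insert, Finset.coe_singleton, sUnion_insert, sUnion_singleton,
        union_compl_self]
  have h1 : |μ A| ≤ ∑ E ∈ ({A, Aᶜ} : Finset (Set Ω)), |μ E| :=
    Finset.single_le_sum (f := fun E => |μ E|) (fun E _ => abs_nonneg _)
      (Finset.mem_insert_self _ _)
  exact h1.trans (le_csSup hμ.2 hmem)

-- sup of sum of monotone nets
lemma aux_sup_add {ι : Type} [Preorder ι] [IsDirected ι (· ≤ ·)] [Nonempty ι]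
    (f g : ι → ℝ) (hf : ∀ a b, a ≤ b → f a ≤ f b) (hg : ∀ a b, a ≤ b → g a ≤ g b)
    (bf : BddAbove (range f)) (bg : BddAbove (range g)) :
    sSup (range fun a => f a + g a) = sSup (range f) + sSup (range g) := by
  apply le_antisymm
  · apply csSup_le (range_nonempty _)
    rintro x ⟨a, rfl⟩
    exact add_le_add (le_csSup bf ⟨a, rfl⟩) (le_csSup bg ⟨a, rfl⟩)
  · apply le_of_forall_pos_le_add
    intro ε hε
    obtain ⟨x, ⟨a, rfl⟩, ha⟩ := exists_lt_of_lt_csSup (range_nonempty f)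
      (show sSup (range f) - ε/2 < sSup (range f) by linarith)
    obtain ⟨y, ⟨b, rfl⟩, hb⟩ := exists_lt_of_lt_csSup (range_nonempty g)
      (show sSup (range g) - ε/2 < sSup (range g) by linarith)
    obtain ⟨c, hac, hbc⟩ := directed_of (· ≤ ·) a b
    have hbdd : BddAbove (range fun a => f a + g a) := by
      refine ⟨sSup (range f) + sSup (range g), ?_⟩
      rintro x ⟨d, rfl⟩
      exact add_le_add (le_csSup bf ⟨d, rfl⟩) (le_csSup bg ⟨d, rfl⟩)
    have : f c + g c ≤ sSup (range fun a => f a + g a) := le_csSup hbdd ⟨c, rfl⟩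
    have h1 := hf a c hac
    have h2 := hg b c hbc
    linarith

/-- `ba(C)` with the total variation norm has property (P): every
increasing (in the pointwise order on `C`), norm bounded net in `ba(C)` has a least
upper bound in `ba(C)` to which it converges in the total variation norm. -/
theorem ba_propertyP {Ω : Type} (C : Set (Set Ω)) (hC : IsSetAlg C)
    (ι : Type) [Preorder ι] [IsDirected ι (· ≤ ·)] [Nonempty ι]
    (F : ι → Set Ω → ℝ) (hF : ∀ a, Memba C (F a))
    (hmono : ∀ a b : ι, a ≤ b → ∀ A ∈ C, F a A ≤ F b A)
    (hbdd : ∃ M : ℝ, ∀ a, tvNorm C (F a) ≤ M) :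
    ∃ μ : Set Ω → ℝ, Memba C μ ∧
      (∀ a, ∀ A ∈ C, F a A ≤ μ A) ∧
      (∀ ν : Set Ω → ℝ, Memba C ν → (∀ a, ∀ A ∈ C, F a A ≤ ν A) →
        ∀ A ∈ C, μ A ≤ ν A) ∧
      Tendsto (fun a => tvNorm C (fun A => μ A - F a A)) atTop (nhds 0) := by
  classical
  obtain ⟨M, hM⟩ := hbdd
  set μ : Set Ω → ℝ := fun A => sSup (range fun a => F a A) with hμdef
  have hbA : ∀ A ∈ C, BddAbove (range fun a => F a A) := by
    intro A hA
    refine ⟨M, ?_⟩; rintro x ⟨a, rfl⟩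
    exact le_trans (le_abs_self _) (le_trans (aux_abs_le hC (hF a) hA) (hM a))
  have hub : ∀ a, ∀ A ∈ C, F a A ≤ μ A := fun a A hA => le_csSup (hbA A hA) ⟨a, rfl⟩
  have hadd : IsFinAdd C μ := by
    constructor
    · show sSup (range fun a => F a ∅) = 0
      have h0 : ∀ a, F a ∅ = 0 := fun a => (hF a).1.1
      have : (range fun a => F a ∅) = {0} := by simp [h0]
      rw [this, csSup_singleton]
    · intro A hA B hB hAB
      show sSup (range fun a => F a (A ∪ B)) = _
      have he : (fun a => F a (A ∪ B)) = fun a => F a A + F a B :=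
        funext fun a => (hF a).1.2 A hA B hB hAB
      rw [he, aux_sup_add _ _ (fun a b h => hmono a b h A hA)
        (fun a b h => hmono a b h B hB) (hbA A hA) (hbA B hB)]
  have hbv : BddVar C μ := by
    refine ⟨M, ?_⟩
    rintro x ⟨π, ⟨hπC, hπd, hπu⟩, rfl⟩
    apply le_of_forall_pos_le_add
    intro ε hε
    set δ : ℝ := ε / (π.card + 1) with hδdef
    have hδpos : 0 < δ := by positivity
    have hex : ∀ E ∈ π, ∃ a, μ E - δ < F a E := by
      intro E hE
      obtain ⟨y, ⟨a, rfl⟩, hy⟩ := exists_lt_of_lt_csSup (range_nonempty fun a => F a E)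
        (show μ E - δ < μ E by linarith)
      exact ⟨a, hy⟩
    choose! g hg using hex
    obtain ⟨c, hc⟩ := (π.image g).exists_le
    have hkey : ∀ E ∈ π, |μ E| ≤ |F c E| + δ := by
      intro E hE
      have hEC : E ∈ C := hπC E hE
      have h1 : F (g E) E ≤ F c E :=
        hmono _ _ (hc _ (Finset.mem_image_of_mem g hE)) E hEC
      have h2 : μ E - δ < F c E := lt_of_lt_of_le (hg E hE) h1
      have h3 : F c E ≤ μ E := hub c E hEC
      calc |μ E| = |F c E + (μ E - F c E)| := by ring_nf
        _ ≤ |F c E| + |μ E - F c E| := abs_add_le _ _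
        _ ≤ |F c E| + δ := by
            have h4 : |μ E - F c E| ≤ δ := by
              rw [abs_of_nonneg (by linarith : (0:ℝ) ≤ μ E - F c E)]; linarith
            linarith
    have hsum : ∑ E ∈ π, |F c E| ≤ M :=
      le_trans (le_csSup (hF c).2 ⟨π, ⟨hπC, hπd, hπu⟩, rfl⟩) (hM c)
    have hcard : (π.card : ℝ) * δ ≤ ε := by
      rw [hδdef]
      rw [div_eq_mul_inv, ← mul_assoc]
      have h1 : (π.card : ℝ) ≤ π.card + 1 := by linarith
      have h2 : (0:ℝ) < (π.card : ℝ) + 1 := by positivity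
      calc (π.card : ℝ) * ε * ((π.card:ℝ) + 1)⁻¹
          ≤ ((π.card:ℝ) + 1) * ε * ((π.card:ℝ) + 1)⁻¹ := by
            apply mul_le_mul_of_nonneg_right _ (by positivity)
            exact mul_le_mul_of_nonneg_right h1 hε.le
        _ = ε := by field_simp
    calc ∑ E ∈ π, |μ E| ≤ ∑ E ∈ π, (|F c E| + δ) := Finset.sum_le_sum hkey
      _ = ∑ E ∈ π, |F c E| + π.card * δ := by
          rw [Finset.sum_add_distrib, Finset.sum_const, nsmul_eq_mul]
      _ ≤ M + ε := by linarith
  have hnorm : ∀ a, tvNorm C (fun A => μ A - F a A) = μ univ - F a univ := by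
    intro a
    have hfa : IsFinAdd C (fun A => μ A - F a A) := by
      constructor
      · show μ ∅ - F a ∅ = 0
        rw [hadd.1, (hF a).1.1]; ring
      · intro A hA B hB hAB
        show μ (A ∪ B) - F a (A ∪ B) = _
        rw [hadd.2 A hA B hB hAB, (hF a).1.2 A hA B hB hAB]; ring
    have hpos : ∀ A ∈ C, 0 ≤ μ A - F a A := fun A hA => by
      have := hub a A hA; linarith
    show totalVar C (fun A => μ A - F a A) univ = _
    rw [totalVar, aux_nonneg_var hC hfa hpos, csSup_singleton]
  have heq : (fun a => tvNorm C (fun A => μ A - F a A))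
      = fun a => μ univ - F a univ := funext hnorm
  refine ⟨μ, ⟨hadd, hbv⟩, hub, ?_, ?_⟩
  · intro ν hν hνub A hA
    exact csSup_le (range_nonempty _) (by rintro x ⟨a, rfl⟩; exact hνub a A hA)
  · rw [heq, Metric.tendsto_nhds]
    intro ε hε
    obtain ⟨y, ⟨a0, rfl⟩, ha0⟩ := exists_lt_of_lt_csSup (range_nonempty fun a => F a univ)
      (show μ univ - ε < μ univ by linarith)
    rw [Filter.eventually_iff, mem_atTop_sets]
    refine ⟨a0, fun b hb => ?_⟩
    have h1 : F a0 univ ≤ F b univ := hmono a0 b hb univ (aux_univ_mem hC)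
    have h2 : F b univ ≤ μ univ := hub b univ (aux_univ_mem hC)
    rw [mem_setOf_eq, Real.dist_eq, sub_zero, abs_of_nonneg (by linarith)]
    linarith
end
end

section
/- Let X be a Banach lattice with property (P) and let 𝒜 be an algebra of subsets of a set Ω. Then the space ba₀(𝒜, X) of finitely additive set functions F : 𝒜 → X with finite norm ‖F‖ = sup over finite 𝒜-partitions π of Ω of ‖Σ_{A∈π} |F(A)|‖_X, ordered setwise, is a Banach lattice possessing property (P). -/
set_option maxHeartbeats 1000000
set_option linter.unusedSectionVars false
noncomputable section
open Filter Set

variable {Ω : Type}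

variable {X : Type} [NormedAddCommGroup X] [Lattice X] [HasSolidNorm X] [IsOrderedAddMonoid X] [NormedSpace ℝ X] [CompleteSpace X]

/-- `F : C → X` is finitely additive. -/
def IsFinAddV (C : Set (Set Ω)) (F : Set Ω → X) : Prop :=
  F ∅ = 0 ∧ ∀ A ∈ C, ∀ B ∈ C, Disjoint A B → F (A ∪ B) = F A + F B

/-- The variation sums `‖Σ_{A∈π} |F A|‖` over finite `C`-partitions `π` of `Ω`. -/
def vSums (C : Set (Set Ω)) (F : Set Ω → X) : Set ℝ :=
  {x | ∃ π : Finset (Set Ω), IsPartition C π univ ∧ x = ‖∑ E ∈ π, |F E|‖}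

/-- The `ba₀(C, X)` norm. -/
def ba0Norm (C : Set (Set Ω)) (F : Set Ω → X) : ℝ :=
  sSup (vSums C F)

/-- `F ∈ ba₀(C, X)`. -/
def Memba0 (C : Set (Set Ω)) (F : Set Ω → X) : Prop :=
  IsFinAddV C F ∧ BddAbove (vSums C F)

/-- Property (P) for `X`: every increasing norm bounded net admits a least upper bound
to which it converges in norm. -/
def PropertyP (X : Type) [NormedAddCommGroup X] [Lattice X] [HasSolidNorm X] [IsOrderedAddMonoid X] : Prop :=
  ∀ (ι : Type) [Preorder ι] [IsDirected ι (· ≤ ·)] [Nonempty ι] (f : ι → X),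
    Monotone f → (∃ M, ∀ a, ‖f a‖ ≤ M) →
      ∃ x : X, IsLUB (Set.range f) x ∧ Tendsto f atTop (nhds x)


open scoped Pointwise

section Aux
variable {Ω : Type} {X : Type} [NormedAddCommGroup X] [Lattice X] [HasSolidNorm X] [IsOrderedAddMonoid X]
variable {C : Set (Set Ω)}

local instance : DecidableEq (Set Ω) := Classical.decEq _

lemma IsSetAlg.univ_mem (hC : IsSetAlg C) : (univ : Set Ω) ∈ C := by
  simpa using hC.2.1 ∅ hC.1

lemma IsSetAlg.inter_mem (hC : IsSetAlg C) {A B} (hA : A ∈ C) (hB : B ∈ C) :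
    A ∩ B ∈ C := by
  simpa [compl_union] using hC.2.1 _ (hC.2.2 _ (hC.2.1 A hA) _ (hC.2.1 B hB))

lemma IsSetAlg.biUnion_mem (hC : IsSetAlg C) {α : Type*} (s : Finset α) (g : α → Set Ω)
    (hg : ∀ i ∈ s, g i ∈ C) : (⋃ i ∈ s, g i) ∈ C := by
  classical
  induction s using Finset.induction_on with
  | empty => simpa using hC.1
  | @insert a s ha ih =>
    rw [Finset.set_biUnion_insert]
    exact hC.2.2 _ (hg a (Finset.mem_insert_self a s)) _
      (ih fun i hi => hg i (Finset.mem_insert_of_mem hi))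

lemma IsFinAddV.sum_disjoint {F : Set Ω → X} (hF : IsFinAddV C F) (hC : IsSetAlg C)
    {α : Type*} (s : Finset α) (g : α → Set Ω) (hg : ∀ i ∈ s, g i ∈ C)
    (hdisj : (s : Set α).PairwiseDisjoint g) :
    F (⋃ i ∈ s, g i) = ∑ i ∈ s, F (g i) := by
  classical
  induction s using Finset.induction_on with
  | empty => simpa using hF.1
  | @insert a s ha ih =>
    rw [Finset.set_biUnion_insert, Finset.sum_insert ha]
    have hgmem : ∀ i ∈ s, g i ∈ C := fun i hi => hg i (Finset.mem_insert_of_mem hi)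
    have hd : Disjoint (g a) (⋃ i ∈ s, g i) := by
      simp only [disjoint_iUnion_right]
      intro i hi
      exact hdisj (by simp) (by simp [hi]) (fun h => ha (h ▸ hi))
    rw [hF.2 _ (hg a (Finset.mem_insert_self a s)) _ (hC.biUnion_mem s g hgmem) hd,
      ih hgmem (hdisj.subset (by simp [Set.subset_def]; tauto))]

lemma IsFinAddV.sum_partition {F : Set Ω → X} (hF : IsFinAddV C F) (hC : IsSetAlg C)
    {π : Finset (Set Ω)} {S : Set Ω} (hπ : IsPartition C π S) :
    ∑ E ∈ π, F E = F S := by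
  have := hF.sum_disjoint hC π id hπ.1 hπ.2.1
  rw [← hπ.2.2, Set.sUnion_eq_biUnion]
  exact this.symm

lemma isPartition_univ (hC : IsSetAlg C) : IsPartition C {univ} (univ : Set Ω) := by
  refine ⟨by simpa using hC.univ_mem, ?_, by simp⟩
  simp [Set.PairwiseDisjoint]

lemma isPartition_pair (hC : IsSetAlg C) {A : Set Ω} (hA : A ∈ C) :
    IsPartition C {A, Aᶜ} univ := by
  refine ⟨?_, ?_, ?_⟩
  · intro E hE
    rcases Finset.mem_insert.1 hE with h | h
    · exact h ▸ hA
    · rw [Finset.mem_singleton.1 h]; exact hC.2.1 A hA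
  · intro x hx y hy hxy
    simp only [Finset.coe_insert, Finset.coe_singleton, Set.mem_insert_iff,
      Set.mem_singleton_iff] at hx hy
    rcases hx with rfl | rfl <;> rcases hy with rfl | rfl
    · exact absurd rfl hxy
    · exact disjoint_compl_right
    · exact disjoint_compl_left
    · exact absurd rfl hxy
  · simp

lemma abs_le_sum_pair (F : Set Ω → X) (A : Set Ω) :
    |F A| ≤ ∑ E ∈ ({A, Aᶜ} : Finset (Set Ω)), |F E| := by
  by_cases h : A = Aᶜ
  · have : ({A, Aᶜ} : Finset (Set Ω)) = {A} := by rw [← h]; simp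
    rw [this, Finset.sum_singleton]
  · rw [Finset.sum_pair h]
    exact le_add_of_nonneg_right (abs_nonneg _)

lemma norm_elem_le (hC : IsSetAlg C) {F : Set Ω → X} {A : Set Ω} (hA : A ∈ C) {b : ℝ}
    (hb : ∀ x ∈ vSums C F, x ≤ b) : ‖F A‖ ≤ b := by
  have h1 : ‖F A‖ ≤ ‖∑ E ∈ ({A, Aᶜ} : Finset (Set Ω)), |F E|‖ := by
    rw [← norm_abs_eq_norm]
    apply norm_le_norm_of_abs_le_abs
    rw [abs_abs, abs_of_nonneg (show (0:X) ≤ ∑ E ∈ ({A, Aᶜ} : Finset (Set Ω)), |F E| from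
      Finset.sum_nonneg fun E _ => abs_nonneg _)]
    exact abs_le_sum_pair F A
  exact h1.trans (hb _ ⟨_, isPartition_pair hC hA, rfl⟩)

lemma vSums_nonempty (hC : IsSetAlg C) (F : Set Ω → X) : (vSums C F).Nonempty :=
  ⟨_, {univ}, isPartition_univ hC, rfl⟩


lemma norm_le_of_mem_Icc {a b x : X} (h1 : a ≤ x) (h2 : x ≤ b) : ‖x‖ ≤ ‖|a| + |b|‖ := by
  rw [← norm_abs_eq_norm]
  apply norm_le_norm_of_abs_le_abs
  rw [abs_abs, abs_of_nonneg (add_nonneg (abs_nonneg a) (abs_nonneg b))]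
  refine abs_le'.2 ⟨?_, ?_⟩
  · exact h2.trans ((le_abs_self b).trans (le_add_of_nonneg_left (abs_nonneg a)))
  · exact (neg_le_neg h1).trans ((neg_le_abs a).trans (le_add_of_nonneg_right (abs_nonneg b)))

/-- Dedekind completeness from property (P). -/
lemma exists_isLUB_of_propertyP (hP : PropertyP X) {S : Set X} (hne : S.Nonempty)
    (hbdd : BddAbove S) : ∃ x, IsLUB S x := by
  classical
  obtain ⟨s₀, hs₀⟩ := hne
  obtain ⟨u, hu⟩ := hbdd
  let ι := {T : Finset X // ↑T ⊆ S ∧ s₀ ∈ T}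
  haveI : Nonempty ι := ⟨⟨{s₀}, by simpa using hs₀, by simp⟩⟩
  letI : Preorder ι := Preorder.lift fun T => T.1
  haveI : IsDirected ι (· ≤ ·) := ⟨fun T T' => by
    refine ⟨⟨T.1 ∪ T'.1, ?_, Finset.mem_union_left _ T.2.2⟩, ?_, ?_⟩
    · intro x hx
      rcases Finset.mem_union.1 (by exact_mod_cast hx) with h | h
      · exact T.2.1 h
      · exact T'.2.1 h
    · exact Finset.subset_union_left
    · exact Finset.subset_union_right⟩
  let f : ι → X := fun T => T.1.sup' ⟨s₀, T.2.2⟩ id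
  have hmono : Monotone f := by
    intro T T' hTT'
    exact Finset.sup'_le _ _ fun b hb => Finset.le_sup' id (hTT' hb)
  have hb1 : ∀ T : ι, s₀ ≤ f T := fun T => Finset.le_sup' id T.2.2
  have hb2 : ∀ T : ι, f T ≤ u := fun T =>
    Finset.sup'_le _ _ fun b hb => hu (T.2.1 hb)
  obtain ⟨x, hx, -⟩ := hP ι f hmono ⟨‖|s₀| + |u|‖, fun T => norm_le_of_mem_Icc (hb1 T) (hb2 T)⟩
  refine ⟨x, ?_, ?_⟩
  · intro s hs
    have : s ≤ f ⟨{s₀, s}, by simp [Set.insert_subset_iff, hs₀, hs], by simp⟩ :=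
      Finset.le_sup' id (by simp)
    exact this.trans (hx.1 (Set.mem_range_self _))
  · intro v hv
    refine hx.2 ?_
    rintro - ⟨T, rfl⟩
    exact Finset.sup'_le _ _ fun b hb => hv (T.2.1 hb)

lemma isLUB_add' {s t : Set X} {a b : X} (ha : IsLUB s a) (hb : IsLUB t b) :
    IsLUB (s + t) (a + b) := by
  constructor
  · rintro - ⟨x, hx, y, hy, rfl⟩
    exact add_le_add (ha.1 hx) (hb.1 hy)
  · intro u hu
    have h1 : ∀ y ∈ t, a ≤ u - y := by
      intro y hy
      refine ha.2 fun x hx => ?_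
      rw [le_sub_iff_add_le]
      exact hu (Set.add_mem_add hx hy)
    have h2 : b ≤ u - a := by
      refine hb.2 fun y hy => ?_
      rw [le_sub_iff_add_le, add_comm]
      rw [← le_sub_iff_add_le]
      exact h1 y hy
    rw [add_comm, ← le_sub_iff_add_le]
    exact h2

lemma abs_sum_le' {α : Type*} (s : Finset α) (f : α → X) :
    |∑ i ∈ s, f i| ≤ ∑ i ∈ s, |f i| := by
  classical
  induction s using Finset.induction_on with
  | empty => simp
  | @insert a s ha ih =>
    rw [Finset.sum_insert ha, Finset.sum_insert ha]
    exact (abs_add_le _ _).trans (add_le_add_right ih _)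

lemma refine_le (hC : IsSetAlg C) {F : Set Ω → X} (hF : IsFinAddV C F)
    {π π' : Finset (Set Ω)} (hπ : IsPartition C π univ) (hπ' : IsPartition C π' univ) :
    ∑ E ∈ π, |F E| ≤ ∑ E ∈ (π ×ˢ π').image (fun p => p.1 ∩ p.2), |F E| := by
  classical
  have hEeq : ∀ E ∈ π, F E = ∑ E' ∈ π', F (E ∩ E') := by
    intro E hE
    have hmem : ∀ E' ∈ π', E ∩ E' ∈ C := fun E' hE' => hC.inter_mem (hπ.1 E hE) (hπ'.1 E' hE')
    have hdisj : (↑π' : Set (Set Ω)).PairwiseDisjoint (fun E' => E ∩ E') := by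
      intro x hx y hy hxy
      exact ((hπ'.2.1 hx hy hxy).mono inter_subset_right inter_subset_right)
    have := hF.sum_disjoint hC π' (fun E' => E ∩ E') hmem hdisj
    rw [← this]
    congr 1
    rw [← Set.inter_iUnion₂]
    rw [show (⋃ i ∈ π', i) = ⋃₀ (↑π' : Set (Set Ω)) from (Set.sUnion_eq_biUnion).symm,
      hπ'.2.2, Set.inter_univ]
  have step1 : ∑ E ∈ π, |F E| ≤ ∑ E ∈ π, ∑ E' ∈ π', |F (E ∩ E')| := by
    refine Finset.sum_le_sum fun E hE => ?_
    rw [hEeq E hE]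
    exact abs_sum_le' _ _
  have step2 : ∑ E ∈ π, ∑ E' ∈ π', |F (E ∩ E')| = ∑ p ∈ π ×ˢ π', |F (p.1 ∩ p.2)| := by
    rw [Finset.sum_product]
  set t := (π ×ˢ π').filter (fun p => p.1 ∩ p.2 ≠ ∅) with ht
  have step3 : ∑ p ∈ π ×ˢ π', |F (p.1 ∩ p.2)| = ∑ p ∈ t, |F (p.1 ∩ p.2)| := by
    refine (Finset.sum_filter_of_ne ?_).symm
    intro p hp hne
    intro h0
    rw [h0, hF.1, abs_zero] at hne
    exact hne rfl
  have hinj : ∀ p ∈ t, ∀ q ∈ t, p.1 ∩ p.2 = q.1 ∩ q.2 → p = q := by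
    intro p hp q hq hpq
    rw [ht, Finset.mem_filter, Finset.mem_product] at hp hq
    obtain ⟨ω, hω⟩ := Set.nonempty_iff_ne_empty.2 hp.2
    have hω' : ω ∈ q.1 ∩ q.2 := hpq ▸ hω
    have h1 : p.1 = q.1 := by
      by_contra hne
      exact Set.disjoint_left.1 (hπ.2.1 hp.1.1 hq.1.1 hne) hω.1 hω'.1
    have h2 : p.2 = q.2 := by
      by_contra hne
      exact Set.disjoint_left.1 (hπ'.2.1 hp.1.2 hq.1.2 hne) hω.2 hω'.2
    exact Prod.ext h1 h2
  have step4 : ∑ p ∈ t, |F (p.1 ∩ p.2)| = ∑ E ∈ t.image (fun p => p.1 ∩ p.2), |F E| :=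
    (Finset.sum_image (f := fun E => |F E|) (g := fun p : Set Ω × Set Ω => p.1 ∩ p.2) hinj).symm
  have step5 : ∑ E ∈ t.image (fun p => p.1 ∩ p.2), |F E|
      = ∑ E ∈ (π ×ˢ π').image (fun p => p.1 ∩ p.2), |F E| := by
    refine Finset.sum_subset (Finset.image_subset_image (Finset.filter_subset _ _)) ?_
    intro E hE hE'
    obtain ⟨p, hp, rfl⟩ := Finset.mem_image.1 hE
    by_cases h0 : p.1 ∩ p.2 = ∅
    · rw [h0, hF.1, abs_zero]
    · exact absurd (Finset.mem_image.2 ⟨p, Finset.mem_filter.2 ⟨hp, h0⟩, rfl⟩) hE'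
  calc ∑ E ∈ π, |F E| ≤ _ := step1
    _ = _ := step2
    _ = _ := step3
    _ = _ := step4
    _ = _ := step5

lemma refine_isPartition (hC : IsSetAlg C)
    {π π' : Finset (Set Ω)} (hπ : IsPartition C π univ) (hπ' : IsPartition C π' univ) :
    IsPartition C ((π ×ˢ π').image (fun p => p.1 ∩ p.2)) univ := by
  classical
  refine ⟨?_, ?_, ?_⟩
  · intro E hE
    obtain ⟨p, hp, rfl⟩ := Finset.mem_image.1 hE
    rw [Finset.mem_product] at hp
    exact hC.inter_mem (hπ.1 _ hp.1) (hπ'.1 _ hp.2)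
  · intro x hx y hy hxy
    obtain ⟨p, hp, rfl⟩ := Finset.mem_image.1 (by exact_mod_cast hx)
    obtain ⟨q, hq, rfl⟩ := Finset.mem_image.1 (by exact_mod_cast hy)
    rw [Finset.mem_product] at hp hq
    by_cases h1 : p.1 = q.1
    · have h2 : p.2 ≠ q.2 := fun h2 => hxy (by rw [h1, h2])
      exact ((hπ'.2.1 hp.2 hq.2 h2).mono inter_subset_right inter_subset_right)
    · exact ((hπ.2.1 hp.1 hq.1 h1).mono inter_subset_left inter_subset_left)
  · rw [Set.eq_univ_iff_forall]
    intro ω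
    have h1 : ω ∈ ⋃₀ (↑π : Set (Set Ω)) := by rw [hπ.2.2]; trivial
    have h2 : ω ∈ ⋃₀ (↑π' : Set (Set Ω)) := by rw [hπ'.2.2]; trivial
    obtain ⟨E, hE, hωE⟩ := h1
    obtain ⟨E', hE', hωE'⟩ := h2
    exact ⟨E ∩ E', by
      simp only [Finset.coe_image, Set.mem_image]
      exact ⟨(E, E'), by simp [Finset.mem_coe.1, Finset.mem_product,
        Finset.mem_coe.1 hE, Finset.mem_coe.1 hE'], rfl⟩, ⟨hωE, hωE'⟩⟩

lemma refine_comm {π π' : Finset (Set Ω)} :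
    (π ×ˢ π').image (fun p : Set Ω × Set Ω => p.1 ∩ p.2)
      = (π' ×ˢ π).image (fun p : Set Ω × Set Ω => p.1 ∩ p.2) := by
  classical
  ext E
  simp only [Finset.mem_image, Finset.mem_product]
  constructor
  · rintro ⟨⟨a, b⟩, ⟨ha, hb⟩, rfl⟩
    exact ⟨(b, a), ⟨hb, ha⟩, Set.inter_comm b a⟩
  · rintro ⟨⟨a, b⟩, ⟨ha, hb⟩, rfl⟩
    exact ⟨(b, a), ⟨hb, ha⟩, Set.inter_comm b a⟩

lemma mem_vSums {F : Set Ω → X} {π : Finset (Set Ω)} (hπ : IsPartition C π univ) :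
    ‖∑ E ∈ π, |F E|‖ ∈ vSums C F := ⟨π, hπ, rfl⟩

/-- Index type for the net of partitions (a fresh type with no order instance). -/
structure PartIdx {Ω : Type} (C : Set (Set Ω)) : Type where
  pi : Finset (Set Ω)
  prop : IsPartition C pi univ


lemma norm_mono_of_nonneg {a b : X} (h0 : 0 ≤ a) (h : a ≤ b) : ‖a‖ ≤ ‖b‖ := by
  rw [← norm_abs_eq_norm a, ← norm_abs_eq_norm b]
  apply norm_le_norm_of_abs_le_abs
  rw [abs_abs, abs_abs, abs_of_nonneg h0, abs_of_nonneg (h0.trans h)]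
  exact h

lemma tendsto_abs' {α : Type*} {l : Filter α} {u : α → X} {x : X}
    (h : Tendsto u l (nhds x)) : Tendsto (fun i => |u i|) l (nhds |x|) :=
  h.sup_nhds h.neg

lemma IsFinAddV.sub' {F G : Set Ω → X} (hF : IsFinAddV C F) (hG : IsFinAddV C G) :
    IsFinAddV C (fun A => F A - G A) := by
  refine ⟨by show F ∅ - G ∅ = 0; rw [hF.1, hG.1, sub_zero], fun A hA B hB hd => ?_⟩
  show F (A ∪ B) - G (A ∪ B) = (F A - G A) + (F B - G B)
  rw [hF.2 A hA B hB hd, hG.2 A hA B hB hd]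
  abel

lemma Memba0.sub' {F G : Set Ω → X} (hF : Memba0 C F) (hG : Memba0 C G) :
    Memba0 C (fun A => F A - G A) := by
  refine ⟨hF.1.sub' hG.1, ?_⟩
  obtain ⟨bF, hbF⟩ := hF.2
  obtain ⟨bG, hbG⟩ := hG.2
  refine ⟨bF + bG, ?_⟩
  rintro - ⟨π, hπ, rfl⟩
  have h1 : ∑ E ∈ π, |F E - G E| ≤ ∑ E ∈ π, |F E| + ∑ E ∈ π, |G E| := by
    rw [← Finset.sum_add_distrib]
    refine Finset.sum_le_sum fun E _ => ?_
    rw [sub_eq_add_neg]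
    exact (abs_add_le _ _).trans_eq (by rw [abs_neg])
  calc ‖∑ E ∈ π, |F E - G E|‖ ≤ ‖∑ E ∈ π, |F E| + ∑ E ∈ π, |G E|‖ :=
        norm_mono_of_nonneg (Finset.sum_nonneg fun E _ => abs_nonneg _) h1
    _ ≤ ‖∑ E ∈ π, |F E|‖ + ‖∑ E ∈ π, |G E|‖ := norm_add_le _ _
    _ ≤ bF + bG := add_le_add (hbF (mem_vSums hπ)) (hbG (mem_vSums hπ))

variable [NormedSpace ℝ X] [CompleteSpace X]

lemma orderBound (hP : PropertyP X) (hC : IsSetAlg C) {D : Set Ω → X} (hD : Memba0 C D) :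
    ∃ x : X, ∀ π : Finset (Set Ω), IsPartition C π univ → ∑ E ∈ π, |D E| ≤ x := by
  classical
  obtain ⟨M, hM⟩ := hD.2
  let ι := PartIdx C
  haveI : Nonempty ι := ⟨⟨{univ}, isPartition_univ hC⟩⟩
  let f : ι → X := fun π => ∑ E ∈ π.pi, |D E|
  letI : Preorder ι := Preorder.lift f
  haveI : IsDirected ι (· ≤ ·) := ⟨fun π π' => by
    refine ⟨⟨(π.pi ×ˢ π'.pi).image (fun p => p.1 ∩ p.2),
      refine_isPartition hC π.prop π'.prop⟩, ?_, ?_⟩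
    · show (∑ E ∈ π.pi, |D E|) ≤ ∑ E ∈ ((π.pi ×ˢ π'.pi).image fun p => p.1 ∩ p.2), |D E|
      exact refine_le hC hD.1 π.prop π'.prop
    · show (∑ E ∈ π'.pi, |D E|) ≤ ∑ E ∈ ((π.pi ×ˢ π'.pi).image fun p => p.1 ∩ p.2), |D E|
      calc (∑ E ∈ π'.pi, |D E|) ≤ ∑ E ∈ ((π'.pi ×ˢ π.pi).image fun p => p.1 ∩ p.2), |D E| :=
            refine_le hC hD.1 π'.prop π.prop
        _ = _ := by rw [refine_comm]⟩
  have hmono : Monotone f := fun a b h => h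
  have hbdd : ∃ M', ∀ a : ι, ‖f a‖ ≤ M' := ⟨M, fun π => hM (mem_vSums π.prop)⟩
  obtain ⟨x, hx, -⟩ := hP ι f hmono hbdd
  exact ⟨x, fun π hπ => hx.1 ⟨⟨π, hπ⟩, rfl⟩⟩

end Aux

/-- If `X` is a Banach lattice with property (P) and `C` an algebra of
subsets of `Ω`, then `ba₀(C, X)`, ordered setwise and with the norm
`‖F‖ = sup_π ‖Σ_{A∈π} |F A|‖`, is a Banach lattice with property (P): it is norm
complete, binary least upper bounds exist, and every increasing norm bounded net has a
least upper bound to which it converges in norm. -/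
theorem ba0_banachLattice_propertyP {Ω : Type} {X : Type}
    [NormedAddCommGroup X] [Lattice X] [HasSolidNorm X] [IsOrderedAddMonoid X] [NormedSpace ℝ X] [CompleteSpace X]
    (hP : PropertyP X) (C : Set (Set Ω)) (hC : IsSetAlg C) :
    -- norm completeness of ba₀(C, X)
    (∀ F : ℕ → Set Ω → X, (∀ n, Memba0 C (F n)) →
      (∀ ε > (0:ℝ), ∃ N, ∀ m ≥ N, ∀ n ≥ N,
        ba0Norm C (fun A => F m A - F n A) < ε) →
      ∃ G : Set Ω → X, Memba0 C G ∧
        Tendsto (fun n => ba0Norm C (fun A => F n A - G A)) atTop (nhds 0)) ∧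
    -- the lattice property: binary least upper bounds exist in the setwise order
    (∀ F G : Set Ω → X, Memba0 C F → Memba0 C G →
      ∃ H : Set Ω → X, Memba0 C H ∧ (∀ A ∈ C, F A ≤ H A) ∧ (∀ A ∈ C, G A ≤ H A) ∧
        ∀ K : Set Ω → X, Memba0 C K → (∀ A ∈ C, F A ≤ K A) → (∀ A ∈ C, G A ≤ K A) →
          ∀ A ∈ C, H A ≤ K A) ∧
    -- property (P) for ba₀(C, X)
    (∀ (ι : Type) [Preorder ι] [IsDirected ι (· ≤ ·)] [Nonempty ι]
      (F : ι → Set Ω → X), (∀ a, Memba0 C (F a)) →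
      (∀ a b : ι, a ≤ b → ∀ A ∈ C, F a A ≤ F b A) →
      (∃ M : ℝ, ∀ a, ba0Norm C (F a) ≤ M) →
      ∃ G : Set Ω → X, Memba0 C G ∧ (∀ a, ∀ A ∈ C, F a A ≤ G A) ∧
        (∀ K : Set Ω → X, Memba0 C K → (∀ a, ∀ A ∈ C, F a A ≤ K A) →
          ∀ A ∈ C, G A ≤ K A) ∧
        Tendsto (fun a => ba0Norm C (fun A => G A - F a A)) atTop (nhds 0)) := by
  classical
  refine ⟨?_, ?_, ?_⟩
  · -- Part 1: completeness
    intro F hF hCauchy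
    have hsubm : ∀ m n, Memba0 C (fun A => F m A - F n A) := fun m n => (hF m).sub' (hF n)
    have hnormlt : ∀ ε > (0:ℝ), ∃ N, ∀ m ≥ N, ∀ n ≥ N, ∀ A ∈ C, ‖F m A - F n A‖ < ε := by
      intro ε hε
      obtain ⟨N, hN⟩ := hCauchy ε hε
      refine ⟨N, fun m hm n hn A hA => ?_⟩
      have h1 : ‖F m A - F n A‖ ≤ sSup (vSums C (fun A => F m A - F n A)) :=
        norm_elem_le hC hA (fun x hx => le_csSup (hsubm m n).2 hx)
      exact lt_of_le_of_lt h1 (hN m hm n hn)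
    have hcauchy : ∀ A ∈ C, CauchySeq (fun n => F n A) := by
      intro A hA
      rw [Metric.cauchySeq_iff]
      intro ε hε
      obtain ⟨N, hN⟩ := hnormlt ε hε
      refine ⟨N, fun m hm n hn => ?_⟩
      rw [dist_eq_norm]
      exact hN m hm n hn A hA
    have hlim : ∀ A ∈ C, ∃ x, Tendsto (fun n => F n A) atTop (nhds x) := fun A hA =>
      cauchySeq_tendsto_of_complete (hcauchy A hA)
    choose! G hG using hlim
    have hGadd : IsFinAddV C G := by
      constructor
      · refine tendsto_nhds_unique (hG ∅ hC.1) ?_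
        have he : (fun n : ℕ => F n ∅) = fun _ => (0 : X) := funext fun n => (hF n).1.1
        rw [he]
        exact tendsto_const_nhds
      · intro A hA B hB hd
        refine tendsto_nhds_unique (hG (A ∪ B) (hC.2.2 A hA B hB)) ?_
        have he : (fun n : ℕ => F n (A ∪ B)) = fun n => F n A + F n B :=
          funext fun n => (hF n).1.2 A hA B hB hd
        rw [he]
        exact (hG A hA).add (hG B hB)
    obtain ⟨N1, hN1⟩ := hCauchy 1 one_pos
    obtain ⟨b1, hb1⟩ := (hF N1).2
    have hGmem : Memba0 C G := by
      refine ⟨hGadd, b1 + 1, ?_⟩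
      rintro - ⟨π, hπ, rfl⟩
      have hsum : Tendsto (fun m => ∑ E ∈ π, |F m E|) atTop (nhds (∑ E ∈ π, |G E|)) :=
        tendsto_finset_sum _ fun E hE => tendsto_abs' (hG E (hπ.1 E hE))
      refine le_of_tendsto hsum.norm ?_
      filter_upwards [eventually_ge_atTop N1] with m hm
      have h2 : ∑ E ∈ π, |F m E| ≤ ∑ E ∈ π, |F N1 E| + ∑ E ∈ π, |F m E - F N1 E| := by
        rw [← Finset.sum_add_distrib]
        refine Finset.sum_le_sum fun E _ => ?_
        calc |F m E| = |F N1 E + (F m E - F N1 E)| := by rw [add_sub_cancel]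
          _ ≤ |F N1 E| + |F m E - F N1 E| := abs_add_le _ _
      calc ‖∑ E ∈ π, |F m E|‖
          ≤ ‖∑ E ∈ π, |F N1 E| + ∑ E ∈ π, |F m E - F N1 E|‖ :=
            norm_mono_of_nonneg (Finset.sum_nonneg fun E _ => abs_nonneg _) h2
        _ ≤ ‖∑ E ∈ π, |F N1 E|‖ + ‖∑ E ∈ π, |F m E - F N1 E|‖ := norm_add_le _ _
        _ ≤ b1 + 1 := by
            refine add_le_add (hb1 (mem_vSums hπ)) ?_
            exact (le_csSup (hsubm m N1).2 (mem_vSums hπ)).trans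
              (hN1 m hm N1 le_rfl).le
    have hbound : ∀ ε > (0:ℝ), ∃ N, ∀ n ≥ N,
        ∀ x ∈ vSums C (fun A => F n A - G A), x ≤ ε := by
      intro ε hε
      obtain ⟨N, hN⟩ := hCauchy ε hε
      refine ⟨N, fun n hn x hx => ?_⟩
      obtain ⟨π, hπ, rfl⟩ := hx
      have hsum : Tendsto (fun m => ‖∑ E ∈ π, |F n E - F m E|‖) atTop
          (nhds ‖∑ E ∈ π, |F n E - G E|‖) :=
        (tendsto_finset_sum _ fun E hE =>
          tendsto_abs' (tendsto_const_nhds.sub (hG E (hπ.1 E hE)))).norm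
      refine le_of_tendsto hsum ?_
      filter_upwards [eventually_ge_atTop N] with m hm
      exact (le_csSup (hsubm n m).2 (mem_vSums hπ)).trans (hN n hn m hm).le
    refine ⟨G, hGmem, ?_⟩
    rw [Metric.tendsto_atTop]
    intro ε hε
    obtain ⟨N, hN⟩ := hbound (ε/2) (by positivity)
    refine ⟨N, fun n hn => ?_⟩
    have hb : BddAbove (vSums C (fun A => F n A - G A)) := ⟨ε/2, fun x hx => hN n hn x hx⟩
    have hnonneg : (0:ℝ) ≤ ba0Norm C (fun A => F n A - G A) :=
      (norm_nonneg _).trans (le_csSup hb (mem_vSums (F := fun A => F n A - G A)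
        (isPartition_univ hC)))
    have hle : ba0Norm C (fun A => F n A - G A) ≤ ε/2 :=
      csSup_le (vSums_nonempty hC _) (fun x hx => hN n hn x hx)
    rw [Real.dist_eq, sub_zero, abs_of_nonneg hnonneg]
    exact lt_of_le_of_lt hle (by linarith)
  · -- Part 2: lattice
    intro F G hF hG
    have hDmem : Memba0 C (fun A => F A - G A) := hF.sub' hG
    set D : Set Ω → X := fun A => F A - G A with hD
    have hD0 : D ∅ = 0 := hDmem.1.1
    obtain ⟨xD, hxD⟩ := orderBound hP hC hDmem
    have hDub : ∀ B ∈ C, D B ≤ xD := by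
      intro B hB
      exact (le_abs_self _).trans ((abs_le_sum_pair D B).trans
        (hxD _ (isPartition_pair hC hB)))
    have hSlub : ∀ A ∈ C, ∃ x, IsLUB {y : X | ∃ B ∈ C, B ⊆ A ∧ y = D B} x := by
      intro A _hA
      refine exists_isLUB_of_propertyP hP ⟨0, ∅, hC.1, Set.empty_subset A, hD0.symm⟩
        ⟨xD, ?_⟩
      rintro - ⟨B, hB, -, rfl⟩
      exact hDub B hB
    choose! P hPl using hSlub
    have hP0 : ∀ A ∈ C, 0 ≤ P A := fun A hA =>
      (hPl A hA).1 ⟨∅, hC.1, Set.empty_subset A, hD0.symm⟩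
    have hPD : ∀ A ∈ C, D A ≤ P A := fun A hA =>
      (hPl A hA).1 ⟨A, hA, subset_rfl, rfl⟩
    have hPem : P ∅ = 0 := by
      refine IsLUB.unique (hPl ∅ hC.1) ?_
      have : {y : X | ∃ B ∈ C, B ⊆ (∅ : Set Ω) ∧ y = D B} = {0} := by
        ext y
        simp only [Set.mem_setOf_eq, Set.mem_singleton_iff]
        constructor
        · rintro ⟨B, hB, hsub, rfl⟩
          rw [Set.subset_empty_iff.1 hsub, hD0]
        · rintro rfl
          exact ⟨∅, hC.1, subset_rfl, hD0.symm⟩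
      rw [this]
      exact isLUB_singleton
    have hPadd : ∀ A ∈ C, ∀ B ∈ C, Disjoint A B → P (A ∪ B) = P A + P B := by
      intro A hA B hB hd
      refine IsLUB.unique (hPl (A ∪ B) (hC.2.2 A hA B hB)) ?_
      have hseteq : {y : X | ∃ B' ∈ C, B' ⊆ A ∪ B ∧ y = D B'}
          = {y : X | ∃ B' ∈ C, B' ⊆ A ∧ y = D B'}
            + {y : X | ∃ B' ∈ C, B' ⊆ B ∧ y = D B'} := by
        ext y
        constructor
        · rintro ⟨B', hB', hsub, rfl⟩
          refine ⟨D (B' ∩ A), ⟨B' ∩ A, hC.inter_mem hB' hA, inter_subset_right, rfl⟩,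
            D (B' ∩ B), ⟨B' ∩ B, hC.inter_mem hB' hB, inter_subset_right, rfl⟩, ?_⟩
          show D (B' ∩ A) + D (B' ∩ B) = D B'
          rw [← hDmem.1.2 _ (hC.inter_mem hB' hA) _ (hC.inter_mem hB' hB)
              (hd.mono inter_subset_right inter_subset_right)]
          rw [← Set.inter_union_distrib_left, Set.inter_eq_left.2 hsub]
        · rintro ⟨y1, ⟨B1, hB1, hs1, rfl⟩, y2, ⟨B2, hB2, hs2, rfl⟩, rfl⟩
          refine ⟨B1 ∪ B2, hC.2.2 _ hB1 _ hB2, Set.union_subset_union hs1 hs2, ?_⟩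
          rw [hDmem.1.2 _ hB1 _ hB2 (hd.mono hs1 hs2)]
      rw [hseteq]
      exact isLUB_add' (hPl A hA) (hPl B hB)
    have hPfin : IsFinAddV C P := ⟨hPem, hPadd⟩
    have hHfin : IsFinAddV C (fun A => G A + P A) := by
      refine ⟨?_, ?_⟩
      · show G ∅ + P ∅ = 0
        rw [hG.1.1, hPem, add_zero]
      · intro A hA B hB hd
        show G (A ∪ B) + P (A ∪ B) = (G A + P A) + (G B + P B)
        rw [hG.1.2 A hA B hB hd, hPadd A hA B hB hd]
        abel
    have hHmem : Memba0 C (fun A => G A + P A) := by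
      refine ⟨hHfin, ?_⟩
      obtain ⟨bG, hbG⟩ := hG.2
      refine ⟨bG + ‖P univ‖, ?_⟩
      rintro - ⟨π, hπ, rfl⟩
      have h1 : ∑ E ∈ π, |G E + P E| ≤ ∑ E ∈ π, |G E| + P univ := by
        rw [← hPfin.sum_partition hC hπ, ← Finset.sum_add_distrib]
        refine Finset.sum_le_sum fun E hE => ?_
        exact (abs_add_le _ _).trans
          (add_le_add_right (le_of_eq (abs_of_nonneg (hP0 E (hπ.1 E hE)))) _)
      calc ‖∑ E ∈ π, |G E + P E|‖ ≤ ‖∑ E ∈ π, |G E| + P univ‖ :=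
            norm_mono_of_nonneg (Finset.sum_nonneg fun E _ => abs_nonneg _) h1
        _ ≤ ‖∑ E ∈ π, |G E|‖ + ‖P univ‖ := norm_add_le _ _
        _ ≤ bG + ‖P univ‖ := add_le_add_left (hbG (mem_vSums hπ)) _
    refine ⟨fun A => G A + P A, hHmem, ?_, ?_, ?_⟩
    · intro A hA
      have := hPD A hA
      have h2 : F A - G A ≤ P A := this
      rw [sub_le_iff_le_add] at h2
      exact h2.trans_eq (add_comm _ _)
    · intro A hA
      exact le_add_of_nonneg_right (hP0 A hA)
    · intro K hK hKF hKG A hA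
      have hub : K A - G A ∈ upperBounds {y : X | ∃ B ∈ C, B ⊆ A ∧ y = D B} := by
        rintro - ⟨B, hB, hsub, rfl⟩
        have h1 : D B ≤ K B - G B := sub_le_sub_right (hKF B hB) _
        have h2 : K B - G B ≤ K A - G A := by
          have hAB : A \ B ∈ C := by
            rw [Set.diff_eq]
            exact hC.inter_mem hA (hC.2.1 B hB)
          have hKG' : K A - G A = (K B - G B) + (K (A \ B) - G (A \ B)) := by
            have := (hK.1.sub' hG.1).2 B hB (A \ B) hAB disjoint_sdiff_right
            rw [Set.union_diff_cancel hsub] at this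
            exact this
          rw [hKG']
          exact le_add_of_nonneg_right (sub_nonneg.2 (hKG (A \ B) hAB))
        exact h1.trans h2
      have := (hPl A hA).2 hub
      rw [le_sub_iff_add_le] at this
      calc G A + P A = P A + G A := add_comm _ _
        _ ≤ K A := this
  · -- Part 3: property (P)
    intro ι _inst1 _inst2 _inst3 F hF hmono hbdd
    obtain ⟨M, hM⟩ := hbdd
    haveI : (atTop : Filter ι).NeBot :=
      atTop_neBot_iff.2 ⟨‹Nonempty ι›, ‹IsDirected ι (· ≤ ·)›⟩
    have hub : ∀ a : ι, ∀ x ∈ vSums C (F a), x ≤ M := by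
      intro a x hx
      calc x ≤ sSup (vSums C (F a)) := le_csSup (hF a).2 hx
        _ ≤ M := hM a
    have hnet : ∀ A ∈ C, ∃ x : X, IsLUB (Set.range fun a => F a A) x ∧
        Tendsto (fun a => F a A) atTop (nhds x) := fun A hA =>
      hP ι (fun a => F a A) (fun a b hab => hmono a b hab A hA)
        ⟨M, fun a => norm_elem_le hC hA (hub a)⟩
    choose! G hG1 hG2 using hnet
    have hGadd : IsFinAddV C G := by
      constructor
      · refine tendsto_nhds_unique (hG2 ∅ hC.1) ?_
        have he : (fun a : ι => F a ∅) = fun _ => (0 : X) := funext fun a => (hF a).1.1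
        rw [he]
        exact tendsto_const_nhds
      · intro A hA B hB hd
        refine tendsto_nhds_unique (hG2 (A ∪ B) (hC.2.2 A hA B hB)) ?_
        have he : (fun a : ι => F a (A ∪ B)) = fun a => F a A + F a B :=
          funext fun a => (hF a).1.2 A hA B hB hd
        rw [he]
        exact (hG2 A hA).add (hG2 B hB)
    have hGmem : Memba0 C G := by
      refine ⟨hGadd, M, ?_⟩
      rintro - ⟨π, hπ, rfl⟩
      have hsum : Tendsto (fun a => ∑ E ∈ π, |F a E|) atTop
          (nhds (∑ E ∈ π, |G E|)) :=
        tendsto_finset_sum _ fun E hE => tendsto_abs' (hG2 E (hπ.1 E hE))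
      exact le_of_tendsto hsum.norm (Eventually.of_forall fun a => hub a _ (mem_vSums hπ))
    refine ⟨G, hGmem, fun a A hA => (hG1 A hA).1 ⟨a, rfl⟩, ?_, ?_⟩
    · intro K _hK hKub A hA
      refine (hG1 A hA).2 ?_
      rintro - ⟨a, rfl⟩
      exact hKub a A hA
    · have hvs : ∀ a, ba0Norm C (fun A => G A - F a A) = ‖G univ - F a univ‖ := by
        intro a
        have hset : vSums C (fun A => G A - F a A) = {‖G univ - F a univ‖} := by
          ext r
          simp only [vSums, Set.mem_setOf_eq, Set.mem_singleton_iff]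
          constructor
          · rintro ⟨π, hπ, rfl⟩
            have habs : ∀ E ∈ π, |G E - F a E| = G E - F a E := fun E hE =>
              abs_of_nonneg (sub_nonneg.2 ((hG1 E (hπ.1 E hE)).1 ⟨a, rfl⟩))
            rw [Finset.sum_congr rfl habs,
              (hGadd.sub' (hF a).1).sum_partition hC hπ]
          · rintro rfl
            refine ⟨{univ}, isPartition_univ hC, ?_⟩
            rw [Finset.sum_singleton,
              abs_of_nonneg (sub_nonneg.2 ((hG1 univ hC.univ_mem).1 ⟨a, rfl⟩))]
        rw [ba0Norm, hset, csSup_singleton]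
      have hlim : Tendsto (fun a => ‖G univ - F a univ‖) atTop (nhds 0) := by
        have := tendsto_iff_norm_sub_tendsto_zero.1 (hG2 univ hC.univ_mem)
        simpa [norm_sub_rev] using this
      simpa [funext hvs] using hlim
end
end

section
/- Let X be a Banach lattice with property (P) and F : 𝒜 → X a finitely additive set function with ‖F‖_{ba₀(𝒜,X)} < ∞. Then the absolute value |F| = F ∨ (−F) exists in ba₀(𝒜, X) and is given by the norm limit over partitions π of the set functions F_π(A) = Σ_{E∈π} |F(A ∩ E)|; moreover ‖|F|‖ = ‖F‖. -/
noncomputable section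
open Filter Set

variable {Ω : Type}

variable {X : Type} [NormedAddCommGroup X] [Lattice X] [HasSolidNorm X] [IsOrderedAddMonoid X] [NormedSpace ℝ X] [CompleteSpace X]

/-- `π` refines `π₀`. -/
def Refines (π π₀ : Finset (Set Ω)) : Prop :=
  ∀ E ∈ π, ∃ E₀ ∈ π₀, E ⊆ E₀


-- Auxiliary lemmas ------------------------------------------------------

lemma myAbsSum {ι : Type} (s : Finset ι) (f : ι → X) :
    |∑ i ∈ s, f i| ≤ ∑ i ∈ s, |f i| := by
  classical
  induction s using Finset.induction_on with
  | empty => simp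
  | @insert a s ha ih =>
      rw [Finset.sum_insert ha, Finset.sum_insert ha]
      exact (abs_add_le _ _).trans (add_le_add_right ih _)

lemma interMem {C : Set (Set Ω)} (hC : IsSetAlg C) {A B : Set Ω} (hA : A ∈ C) (hB : B ∈ C) :
    A ∩ B ∈ C := by
  have h : A ∩ B = (Aᶜ ∪ Bᶜ)ᶜ := by rw [Set.compl_union, compl_compl, compl_compl]
  rw [h]
  exact hC.2.1 _ (hC.2.2 _ (hC.2.1 _ hA) _ (hC.2.1 _ hB))

lemma unionMem {C : Set (Set Ω)} (hC : IsSetAlg C) {ι : Type} (s : Finset ι) (f : ι → Set Ω)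
    (hf : ∀ i ∈ s, f i ∈ C) : (⋃ i ∈ s, f i) ∈ C := by
  classical
  induction s using Finset.induction_on with
  | empty => simpa using hC.1
  | @insert a s ha ih =>
      rw [Finset.set_biUnion_insert]
      exact hC.2.2 _ (hf a (Finset.mem_insert_self a s)) _
        (ih fun i hi => hf i (Finset.mem_insert_of_mem hi))

lemma sumAdd {C : Set (Set Ω)} (hC : IsSetAlg C) {F : Set Ω → X} (hF : IsFinAddV C F)
    {ι : Type} (s : Finset ι) (f : ι → Set Ω)
    (hf : ∀ i ∈ s, f i ∈ C) (hd : (s : Set ι).PairwiseDisjoint f) :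
    F (⋃ i ∈ s, f i) = ∑ i ∈ s, F (f i) := by
  classical
  induction s using Finset.induction_on with
  | empty => simpa using hF.1
  | @insert a s ha ih =>
      have hf' : ∀ i ∈ s, f i ∈ C := fun i hi => hf i (Finset.mem_insert_of_mem hi)
      have hd' : (s : Set ι).PairwiseDisjoint f :=
        hd.subset (Finset.coe_subset.mpr (Finset.subset_insert a s))
      have hdis : Disjoint (f a) (⋃ i ∈ s, f i) := by
        rw [Set.disjoint_iUnion₂_right]
        intro i hi
        exact hd (by simp) (by simp [hi]) (by rintro rfl; exact ha hi)
      rw [Finset.set_biUnion_insert, Finset.sum_insert ha,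
        hF.2 _ (hf a (Finset.mem_insert_self a s)) _ (unionMem hC s f hf') hdis, ih hf' hd']

lemma sumImageZero [DecidableEq (Set Ω)] {ι : Type} (s : Finset ι) (f : ι → Set Ω)
    (hd : (s : Set ι).PairwiseDisjoint f) (g : Set Ω → X) (hg : g ∅ = 0) :
    ∑ B ∈ s.image f, g B = ∑ i ∈ s, g (f i) := by
  classical
  set s' := s.filter (fun i => f i ≠ ∅) with hs'
  have h1 : ∑ i ∈ s', g (f i) = ∑ i ∈ s, g (f i) := by
    apply Finset.sum_filter_of_ne
    intro i _ hne
    intro h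
    exact hne (by rw [h, hg])
  have h2 : ∑ B ∈ s'.image f, g B = ∑ i ∈ s', g (f i) := by
    apply Finset.sum_image
    intro i hi j hj hij
    by_contra hne
    have hdis := hd (Finset.mem_coe.mpr (Finset.filter_subset _ _ hi))
      (Finset.mem_coe.mpr (Finset.filter_subset _ _ hj)) hne
    simp only [Function.onFun] at hdis
    rw [hij] at hdis
    exact (Finset.mem_filter.mp hj).2 (disjoint_self.mp hdis)
  have h3 : ∑ B ∈ s'.image f, g B = ∑ B ∈ s.image f, g B := by
    apply Finset.sum_subset (Finset.image_subset_image (Finset.filter_subset _ _))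
    intro B hB hB'
    obtain ⟨i, hi, rfl⟩ := Finset.mem_image.mp hB
    by_cases h : f i = ∅
    · rw [h, hg]
    · exact absurd (Finset.mem_image_of_mem f (Finset.mem_filter.mpr ⟨hi, h⟩)) hB'
  rw [← h3, h2, h1]

lemma comRefPartition [DecidableEq (Set Ω)] {C : Set (Set Ω)} (hC : IsSetAlg C)
    {σ π : Finset (Set Ω)}
    (hσ : IsPartition C σ univ) (hπ : IsPartition C π univ) :
    IsPartition C ((σ ×ˢ π).image (fun p => p.1 ∩ p.2)) univ ∧
    Refines ((σ ×ˢ π).image (fun p => p.1 ∩ p.2)) σ ∧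
    Refines ((σ ×ˢ π).image (fun p => p.1 ∩ p.2)) π ∧
    ((σ ×ˢ π : Finset (Set Ω × Set Ω)) : Set (Set Ω × Set Ω)).PairwiseDisjoint
      (fun p => p.1 ∩ p.2) := by
  classical
  have hpd : ((σ ×ˢ π : Finset (Set Ω × Set Ω)) : Set (Set Ω × Set Ω)).PairwiseDisjoint
      (fun p => p.1 ∩ p.2) := by
    intro p hp q hq hne
    simp only [Finset.coe_product, Set.mem_prod] at hp hq
    by_cases h1 : p.1 = q.1
    · have h2 : p.2 ≠ q.2 := fun h2 => hne (Prod.ext h1 h2)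
      exact (hπ.2.1 hp.2 hq.2 h2).mono Set.inter_subset_right Set.inter_subset_right
    · exact (hσ.2.1 hp.1 hq.1 h1).mono Set.inter_subset_left Set.inter_subset_left
  refine ⟨⟨?_, ?_, ?_⟩, ?_, ?_, hpd⟩
  · intro E hE
    obtain ⟨p, hp, rfl⟩ := Finset.mem_image.mp hE
    rw [Finset.mem_product] at hp
    exact interMem hC (hσ.1 _ hp.1) (hπ.1 _ hp.2)
  · intro B hB B' hB' hne
    simp only [Finset.coe_image, Set.mem_image, Finset.mem_coe] at hB hB'
    obtain ⟨p, hp, rfl⟩ := hB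
    obtain ⟨q, hq, rfl⟩ := hB'
    exact hpd (by simpa using hp) (by simpa using hq) (fun h => hne (by rw [h]))
  · ext x
    simp only [mem_sUnion, Finset.mem_coe, Finset.mem_image, mem_univ, iff_true]
    have hx1 : x ∈ ⋃₀ (σ : Set (Set Ω)) := by rw [hσ.2.2]; trivial
    have hx2 : x ∈ ⋃₀ (π : Set (Set Ω)) := by rw [hπ.2.2]; trivial
    obtain ⟨A, hA, hxA⟩ := hx1
    obtain ⟨E, hE, hxE⟩ := hx2
    exact ⟨A ∩ E, ⟨⟨A, E⟩, Finset.mem_product.mpr ⟨hA, hE⟩, rfl⟩, hxA, hxE⟩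
  · intro E hE
    obtain ⟨p, hp, rfl⟩ := Finset.mem_image.mp hE
    rw [Finset.mem_product] at hp
    exact ⟨p.1, hp.1, Set.inter_subset_left⟩
  · intro E hE
    obtain ⟨p, hp, rfl⟩ := Finset.mem_image.mp hE
    rw [Finset.mem_product] at hp
    exact ⟨p.2, hp.2, Set.inter_subset_right⟩

lemma partMono {C : Set (Set Ω)} (hC : IsSetAlg C) {F : Set Ω → X} (hF : IsFinAddV C F)
    {A : Set Ω} (hA : A ∈ C) {π σ : Finset (Set Ω)}
    (hπ : IsPartition C π univ) (hσ : IsPartition C σ univ) (href : Refines σ π) :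
    ∑ E ∈ π, |F (A ∩ E)| ≤ ∑ E ∈ σ, |F (A ∩ E)| := by
  classical
  set t : Set Ω → Finset (Set Ω) := fun E₀ => σ.filter (fun E => E ⊆ E₀ ∧ E ≠ ∅) with ht
  have key : ∀ E₀ ∈ π, A ∩ E₀ = ⋃ E ∈ t E₀, A ∩ E := by
    intro E₀ hE₀
    ext x
    constructor
    · rintro ⟨hxA, hxE₀⟩
      have hxu : x ∈ ⋃₀ (σ : Set (Set Ω)) := by rw [hσ.2.2]; trivial
      obtain ⟨E, hE, hxE⟩ := hxu
      rw [Finset.mem_coe] at hE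
      obtain ⟨E₀', hE₀', hsub⟩ := href E hE
      have hEeq : E₀' = E₀ := by
        by_contra hne
        exact Set.disjoint_left.mp (hπ.2.1 (Finset.mem_coe.mpr hE₀') (Finset.mem_coe.mpr hE₀) hne)
          (hsub hxE) hxE₀
      subst hEeq
      have hEt : E ∈ t E₀' := Finset.mem_filter.mpr ⟨hE, hsub, fun h => (h ▸ hxE : x ∈ (∅ : Set Ω))⟩
      exact Set.mem_biUnion hEt ⟨hxA, hxE⟩
    · intro hx
      simp only [Set.mem_iUnion] at hx
      obtain ⟨E, hEt, hxA, hxE⟩ := hx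
      exact ⟨hxA, (Finset.mem_filter.mp hEt).2.1 hxE⟩
  have hsum : ∀ E₀ ∈ π, |F (A ∩ E₀)| ≤ ∑ E ∈ t E₀, |F (A ∩ E)| := by
    intro E₀ hE₀
    rw [key E₀ hE₀, sumAdd hC hF (t E₀) (fun E => A ∩ E)
      (fun E hE => interMem hC hA (hσ.1 E (Finset.filter_subset _ _ hE)))
      (fun E hE E' hE' hne => (hσ.2.1 (Finset.mem_coe.mpr (Finset.filter_subset _ _ hE))
        (Finset.mem_coe.mpr (Finset.filter_subset _ _ hE')) hne).mono
        Set.inter_subset_right Set.inter_subset_right)]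
    exact myAbsSum _ _
  have hdisjt : ((π : Set (Set Ω))).PairwiseDisjoint t := by
    intro E₀ hE₀ E₀' hE₀' hne
    simp only [Function.onFun]
    rw [Finset.disjoint_left]
    intro E hEt hEt'
    obtain ⟨_, hsub, hnem⟩ := Finset.mem_filter.mp hEt
    obtain ⟨_, hsub', _⟩ := Finset.mem_filter.mp hEt'
    apply hnem
    rw [← Set.subset_empty_iff]
    intro x hx
    exact Set.disjoint_left.mp (hπ.2.1 hE₀ hE₀' hne) (hsub hx) (hsub' hx)
  calc ∑ E₀ ∈ π, |F (A ∩ E₀)| ≤ ∑ E₀ ∈ π, ∑ E ∈ t E₀, |F (A ∩ E)| := Finset.sum_le_sum hsum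
    _ = ∑ E ∈ π.biUnion t, |F (A ∩ E)| := (Finset.sum_biUnion hdisjt).symm
    _ ≤ ∑ E ∈ σ, |F (A ∩ E)| := Finset.sum_le_sum_of_subset_of_nonneg
        (fun E hE => (Finset.mem_filter.mp (Finset.mem_biUnion.mp hE).choose_spec.2).1)
        (fun _ _ _ => abs_nonneg _)

/-- The index type of finite `C`-partitions of `univ`, ordered by refinement. -/
structure PartIdx_s9 (C : Set (Set Ω)) : Type where
  pt : Finset (Set Ω)
  isPart : IsPartition C pt univ

instance partIdxPreorder (C : Set (Set Ω)) : Preorder (PartIdx_s9 C) where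
  le a b := Refines b.pt a.pt
  le_refl a E hE := ⟨E, hE, subset_rfl⟩
  le_trans a b c hab hbc E hE := by
    obtain ⟨E₁, hE₁, h1⟩ := hbc E hE
    obtain ⟨E₀, hE₀, h0⟩ := hab E₁ hE₁
    exact ⟨E₀, hE₀, h1.trans h0⟩
  lt a b := Refines b.pt a.pt ∧ ¬ Refines a.pt b.pt
  lt_iff_le_not_ge _ _ := Iff.rfl


lemma partBound [DecidableEq (Set Ω)] {C : Set (Set Ω)} (hC : IsSetAlg C) {F : Set Ω → X}
    (hF : IsFinAddV C F) {M : ℝ} (hM : M ∈ upperBounds (vSums C F))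
    {A : Set Ω} (hA : A ∈ C) {π : Finset (Set Ω)} (hπ : IsPartition C π univ) :
    ‖∑ E ∈ π, |F (A ∩ E)|‖ ≤ M := by
  classical
  have hσ₂ : IsPartition C ({A, Aᶜ} : Finset (Set Ω)) univ := by
    refine ⟨?_, ?_, ?_⟩
    · intro E hE
      rcases Finset.mem_insert.mp hE with rfl | hE
      · exact hA
      · rw [Finset.mem_singleton.mp hE]; exact hC.2.1 _ hA
    · intro x hx y hy hne
      simp only [Finset.coe_insert, Finset.coe_singleton, Set.mem_insert_iff,
        Set.mem_singleton_iff] at hx hy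
      simp only [Function.onFun, id]
      rcases hx with rfl | rfl <;> rcases hy with rfl | rfl
      · exact absurd rfl hne
      · exact disjoint_compl_right
      · exact disjoint_compl_left
      · exact absurd rfl hne
    · rw [Finset.coe_insert, Finset.coe_singleton, Set.sUnion_insert, Set.sUnion_singleton,
        Set.union_compl_self]
  obtain ⟨hτ, _, _, hpd⟩ := comRefPartition hC hσ₂ hπ
  set τ := (({A, Aᶜ} : Finset (Set Ω)) ×ˢ π).image (fun p => p.1 ∩ p.2) with hτdef
  have habs0 : |F (∅ : Set Ω)| = 0 := by rw [hF.1, abs_zero]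
  have hsum1 : ∑ B ∈ τ, |F B| = ∑ B ∈ ({A, Aᶜ} : Finset (Set Ω)), ∑ E ∈ π, |F (B ∩ E)| := by
    rw [hτdef, sumImageZero _ _ hpd (fun B => |F B|) habs0, Finset.sum_product]
  have hle : ∑ E ∈ π, |F (A ∩ E)| ≤ ∑ B ∈ τ, |F B| := by
    rw [hsum1]
    exact Finset.single_le_sum (f := fun B => ∑ E ∈ π, |F (B ∩ E)|)
      (fun B _ => Finset.sum_nonneg fun E _ => abs_nonneg _) (Finset.mem_insert_self _ _)
  have h1 : (0:X) ≤ ∑ E ∈ π, |F (A ∩ E)| := Finset.sum_nonneg fun E _ => abs_nonneg _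
  have h2 : (0:X) ≤ ∑ B ∈ τ, |F B| := Finset.sum_nonneg fun E _ => abs_nonneg _
  have hnorm : ‖∑ E ∈ π, |F (A ∩ E)|‖ ≤ ‖∑ B ∈ τ, |F B|‖ :=
    HasSolidNorm.solid (by rw [abs_of_nonneg h1, abs_of_nonneg h2]; exact hle)
  exact hnorm.trans (hM ⟨τ, hτ, rfl⟩)

/-- For `F ∈ ba₀(C, X)` with `X` a Banach lattice with property (P), the
absolute value `|F| = F ∨ (−F)` exists in `ba₀(C, X)`: it is the least upper bound of
`F` and `−F` in the setwise order, it is the norm limit over the refinement-directed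
net of partitions of the set functions `F_π (A) = Σ_{E∈π} |F (A ∩ E)|`, and
`‖|F|‖ = ‖F‖`. -/
theorem ba0_abs_exists {Ω : Type} {X : Type}
    [NormedAddCommGroup X] [Lattice X] [HasSolidNorm X] [IsOrderedAddMonoid X] [NormedSpace ℝ X] [CompleteSpace X]
    (hP : PropertyP X) (C : Set (Set Ω)) (hC : IsSetAlg C)
    (F : Set Ω → X) (hF : Memba0 C F) :
    ∃ Fabs : Set Ω → X, Memba0 C Fabs ∧
      -- `Fabs` is the least upper bound of `F` and `-F` in `ba₀(C, X)`
      (∀ A ∈ C, F A ≤ Fabs A) ∧ (∀ A ∈ C, -F A ≤ Fabs A) ∧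
      (∀ G : Set Ω → X, Memba0 C G → (∀ A ∈ C, F A ≤ G A) → (∀ A ∈ C, -F A ≤ G A) →
        ∀ A ∈ C, Fabs A ≤ G A) ∧
      -- `Fabs` is the norm limit of the partition net `F_π`
      (∀ ε > (0:ℝ), ∃ π₀ : Finset (Set Ω), IsPartition C π₀ univ ∧
        ∀ π : Finset (Set Ω), IsPartition C π univ → Refines π π₀ →
          ba0Norm C (fun A => Fabs A - ∑ E ∈ π, |F (A ∩ E)|) < ε) ∧
      -- `‖|F|‖ = ‖F‖`
      ba0Norm C Fabs = ba0Norm C F := by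
  classical
  obtain ⟨hFadd, M, hM⟩ := hF
  have hunivC : (univ : Set Ω) ∈ C := by
    have h := hC.2.1 ∅ hC.1; rwa [Set.compl_empty] at h
  have hunivPart : IsPartition C ({univ} : Finset (Set Ω)) univ := by
    refine ⟨by simp [hunivC], by simp, by simp⟩
  let ι : Type := PartIdx_s9 C
  haveI : Nonempty ι := ⟨⟨{univ}, hunivPart⟩⟩
  haveI : IsDirected ι (· ≤ ·) := ⟨fun a b => by
    obtain ⟨hpart, href1, href2, _⟩ := comRefPartition hC a.isPart b.isPart
    exact ⟨⟨_, hpart⟩, href1, href2⟩⟩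
  haveI : (atTop : Filter ι).NeBot := atTop_neBot_iff.mpr ⟨inferInstance, inferInstance⟩
  set f : Set Ω → ι → X := fun A π => ∑ E ∈ π.pt, |F (A ∩ E)| with hfdef
  have hfmono : ∀ A ∈ C, Monotone (f A) := fun A hA π σ h =>
    partMono hC hFadd hA π.isPart σ.isPart h
  have hfbd : ∀ A ∈ C, ∀ π : ι, ‖f A π‖ ≤ M := fun A hA π =>
    partBound hC hFadd hM hA π.isPart
  have key : ∀ A, A ∈ C → ∃ x : X, IsLUB (Set.range (f A)) x ∧ Tendsto (f A) atTop (nhds x) :=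
    fun A hA => hP ι (f A) (hfmono A hA) ⟨M, hfbd A hA⟩
  choose! Fabs hlub htend using key
  have hfnonneg : ∀ A, ∀ π : ι, (0:X) ≤ f A π := fun A π =>
    Finset.sum_nonneg fun E _ => abs_nonneg _
  have hge : ∀ A, A ∈ C → ∀ π : ι, f A π ≤ Fabs A := fun A hA π =>
    (hlub A hA).1 (Set.mem_range_self π)
  have hFabs_nonneg : ∀ A, A ∈ C → (0:X) ≤ Fabs A := fun A hA =>
    le_trans (hfnonneg A ⟨{univ}, hunivPart⟩) (hge A hA ⟨{univ}, hunivPart⟩)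
  have hFabs_empty : Fabs ∅ = 0 := by
    have h0 : f ∅ = fun _ : ι => (0:X) := by
      funext π
      simp only [hfdef]
      refine Finset.sum_eq_zero fun E _ => ?_
      rw [Set.empty_inter, hFadd.1, abs_zero]
    exact tendsto_nhds_unique (h0 ▸ htend ∅ hC.1) tendsto_const_nhds
  have hFabs_add : ∀ A ∈ C, ∀ B ∈ C, Disjoint A B → Fabs (A ∪ B) = Fabs A + Fabs B := by
    intro A hA B hB hAB
    have hpart : IsPartition C ({A, B, (A ∪ B)ᶜ} : Finset (Set Ω)) univ := by
      refine ⟨?_, ?_, ?_⟩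
      · intro E hE
        simp only [Finset.mem_insert, Finset.mem_singleton] at hE
        rcases hE with rfl | rfl | rfl
        · exact hA
        · exact hB
        · exact hC.2.1 _ (hC.2.2 _ hA _ hB)
      · intro x hx y hy hne
        simp only [Finset.coe_insert, Finset.coe_singleton, Set.mem_insert_iff,
          Set.mem_singleton_iff] at hx hy
        simp only [Function.onFun, id]
        have d1 : Disjoint A (A ∪ B)ᶜ := disjoint_compl_right.mono_left Set.subset_union_left
        have d2 : Disjoint B (A ∪ B)ᶜ := disjoint_compl_right.mono_left Set.subset_union_right
        rcases hx with rfl | rfl | rfl <;> rcases hy with rfl | rfl | rfl <;>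
          first
            | exact absurd rfl hne
            | exact hAB | exact hAB.symm | exact d1 | exact d1.symm | exact d2 | exact d2.symm
      · rw [Finset.coe_insert, Finset.coe_insert, Finset.coe_singleton, Set.sUnion_insert,
          Set.sUnion_insert, Set.sUnion_singleton, ← Set.union_assoc, Set.union_compl_self]
    set π₁ : ι := ⟨{A, B, (A ∪ B)ᶜ}, hpart⟩ with hπ₁
    have hev : ∀ π : ι, π₁ ≤ π → f (A ∪ B) π = f A π + f B π := by
      intro π hle
      simp only [hfdef]
      rw [← Finset.sum_add_distrib]
      refine Finset.sum_congr rfl fun E hE => ?_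
      obtain ⟨E₀, hE₀, hsub⟩ := hle E hE
      simp only [hπ₁, Finset.mem_insert, Finset.mem_singleton] at hE₀
      have hBotAbs : ∀ s : Set Ω, s = ∅ → |F s| = 0 := fun s hs => by
        rw [hs, hFadd.1, abs_zero]
      rcases hE₀ with h | h | h <;> rw [h] at hsub
      · have h1 : (A ∪ B) ∩ E = A ∩ E := by
          apply Set.Subset.antisymm
          · rintro x ⟨_, hxE⟩; exact ⟨hsub hxE, hxE⟩
          · exact Set.inter_subset_inter_left _ Set.subset_union_left
        have h2 : B ∩ E = ∅ := by
          rw [← Set.subset_empty_iff]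
          rintro x ⟨hxB, hxE⟩
          exact (Set.disjoint_left.mp hAB (hsub hxE)) hxB
        rw [h1, hBotAbs _ h2, add_zero]
      · have h1 : (A ∪ B) ∩ E = B ∩ E := by
          apply Set.Subset.antisymm
          · rintro x ⟨_, hxE⟩; exact ⟨hsub hxE, hxE⟩
          · exact Set.inter_subset_inter_left _ Set.subset_union_right
        have h2 : A ∩ E = ∅ := by
          rw [← Set.subset_empty_iff]
          rintro x ⟨hxA, hxE⟩
          exact (Set.disjoint_right.mp hAB (hsub hxE)) hxA
        rw [h1, hBotAbs _ h2, zero_add]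
      · have h1 : (A ∪ B) ∩ E = ∅ := by
          rw [← Set.subset_empty_iff]
          rintro x ⟨hxAB, hxE⟩
          exact hsub hxE hxAB
        have h2 : A ∩ E = ∅ := by
          rw [← Set.subset_empty_iff]
          rintro x ⟨hxA, hxE⟩
          exact hsub hxE (Set.mem_union_left _ hxA)
        have h3 : B ∩ E = ∅ := by
          rw [← Set.subset_empty_iff]
          rintro x ⟨hxB, hxE⟩
          exact hsub hxE (Set.mem_union_right _ hxB)
        rw [hBotAbs _ h1, hBotAbs _ h2, hBotAbs _ h3, add_zero]
    have t1 : Tendsto (fun π : ι => f A π + f B π) atTop (nhds (Fabs A + Fabs B)) :=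
      (htend A hA).add (htend B hB)
    have t2 : Tendsto (f (A ∪ B)) atTop (nhds (Fabs A + Fabs B)) :=
      t1.congr' (eventually_atTop.mpr ⟨π₁, fun π h => (hev π h).symm⟩)
    exact tendsto_nhds_unique (htend (A ∪ B) (hC.2.2 _ hA _ hB)) t2
  have hFabsAddV : IsFinAddV C Fabs := ⟨hFabs_empty, hFabs_add⟩
  have hFabs_sum : ∀ π : ι, ∑ E ∈ π.pt, Fabs E = Fabs univ := by
    intro π
    have h := sumAdd hC hFabsAddV π.pt id π.isPart.1 π.isPart.2.1
    have h2 : (⋃ i ∈ π.pt, id i) = univ := by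
      rw [← π.isPart.2.2]
      ext x
      simp [mem_sUnion]
    rw [h2] at h
    exact h.symm
  have hvFabs : ∀ x ∈ vSums C Fabs, x = ‖Fabs univ‖ := by
    rintro x ⟨π, hπ, rfl⟩
    have habs : ∀ E ∈ π, |Fabs E| = Fabs E := fun E hE =>
      abs_of_nonneg (hFabs_nonneg E (hπ.1 E hE))
    rw [Finset.sum_congr rfl habs, hFabs_sum ⟨π, hπ⟩]
  have hvFabs_mem : ‖Fabs univ‖ ∈ vSums C Fabs :=
    ⟨{univ}, hunivPart, by
      rw [Finset.sum_singleton, abs_of_nonneg (hFabs_nonneg univ hunivC)]⟩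
  have hbddFabs : BddAbove (vSums C Fabs) := ⟨‖Fabs univ‖, fun x hx => (hvFabs x hx).le⟩
  have hnormFabs : ba0Norm C Fabs = ‖Fabs univ‖ :=
    le_antisymm (Real.sSup_le (fun x hx => (hvFabs x hx).le) (norm_nonneg _))
      (le_csSup hbddFabs hvFabs_mem)
  have hfu : ∀ π : ι, f univ π = ∑ E ∈ π.pt, |F E| := fun π => by
    simp only [hfdef, Set.univ_inter]
  have hnn : (0:X) ≤ Fabs univ := hFabs_nonneg univ hunivC
  have hnormle : ∀ π : ι, ‖f univ π‖ ≤ ‖Fabs univ‖ := fun π =>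
    HasSolidNorm.solid (by
      rw [abs_of_nonneg (hfnonneg univ π), abs_of_nonneg hnn]
      exact hge univ hunivC π)
  have htendnorm : Tendsto (fun π : ι => ‖f univ π‖) atTop (nhds ‖Fabs univ‖) :=
    (htend univ hunivC).norm
  have hlubnorm : IsLUB (vSums C F) ‖Fabs univ‖ := by
    constructor
    · rintro x ⟨π, hπ, rfl⟩
      have h := hnormle ⟨π, hπ⟩
      rwa [hfu ⟨π, hπ⟩] at h
    · intro b hb
      refine le_of_tendsto htendnorm (Eventually.of_forall fun π => ?_)
      exact hb ⟨π.pt, π.isPart, (hfu π).symm ▸ rfl⟩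
  have hnormF : ba0Norm C F = ‖Fabs univ‖ :=
    hlubnorm.csSup_eq ⟨_, ⟨{univ}, hunivPart, rfl⟩⟩
  have habsle : ∀ A, A ∈ C → |F A| ≤ Fabs A := by
    intro A hA
    have h := hge A hA ⟨{univ}, hunivPart⟩
    simp only [hfdef, Finset.sum_singleton, Set.inter_univ] at h
    exact h
  have hmin : ∀ G : Set Ω → X, Memba0 C G → (∀ A ∈ C, F A ≤ G A) → (∀ A ∈ C, -F A ≤ G A) →
      ∀ A ∈ C, Fabs A ≤ G A := by
    intro G hG h1 h2 A hA
    refine (hlub A hA).2 ?_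
    rintro x ⟨π, rfl⟩
    have hmem : ∀ E ∈ π.pt, A ∩ E ∈ C := fun E hE => interMem hC hA (π.isPart.1 E hE)
    have hstep : ∀ E ∈ π.pt, |F (A ∩ E)| ≤ G (A ∩ E) := fun E hE =>
      abs_le'.mpr ⟨h1 _ (hmem E hE), h2 _ (hmem E hE)⟩
    have hdisj : ((π.pt : Set (Set Ω))).PairwiseDisjoint (fun E => A ∩ E) :=
      fun E hE E' hE' hne => (π.isPart.2.1 hE hE' hne).mono
        Set.inter_subset_right Set.inter_subset_right
    have hcup : (⋃ E ∈ π.pt, A ∩ E) = A := by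
      rw [← Set.inter_iUnion₂]
      have h2' : (⋃ E ∈ π.pt, E) = univ := by
        rw [← π.isPart.2.2]; ext x; simp [mem_sUnion]
      rw [h2', Set.inter_univ]
    calc f A π ≤ ∑ E ∈ π.pt, G (A ∩ E) := Finset.sum_le_sum hstep
      _ = G (⋃ E ∈ π.pt, A ∩ E) := (sumAdd hC hG.1 π.pt (fun E => A ∩ E) hmem hdisj).symm
      _ = G A := by rw [hcup]
  have heps : ∀ ε > (0:ℝ), ∃ π₀ : Finset (Set Ω), IsPartition C π₀ univ ∧
      ∀ π : Finset (Set Ω), IsPartition C π univ → Refines π π₀ →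
        ba0Norm C (fun A => Fabs A - ∑ E ∈ π, |F (A ∩ E)|) < ε := by
    intro ε hε
    have hev : ∀ᶠ τ : ι in atTop, ‖Fabs univ - f univ τ‖ < ε / 2 := by
      have h1 : Tendsto (fun τ : ι => ‖Fabs univ - f univ τ‖) atTop (nhds 0) := by
        have h2 := ((htend univ hunivC).const_sub (Fabs univ)).norm
        rwa [sub_self, norm_zero] at h2
      exact h1.eventually (gt_mem_nhds (by linarith))
    obtain ⟨π₀, hπ₀⟩ := eventually_atTop.mp hev
    refine ⟨π₀.pt, π₀.isPart, ?_⟩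
    intro π hπ href
    set Gp : Set Ω → X := fun A => Fabs A - ∑ E ∈ π, |F (A ∩ E)| with hGp
    have hval : ∀ x ∈ vSums C Gp, x < ε / 2 := by
      rintro x ⟨σ, hσ, rfl⟩
      obtain ⟨hτpart, hrefσ, hrefπ, hpd⟩ := comRefPartition hC hσ hπ
      set τfin := ((σ ×ˢ π).image (fun p => p.1 ∩ p.2)) with hτfin
      set τ : ι := ⟨τfin, hτpart⟩ with hτ
      have hτge : π₀ ≤ τ := by
        intro E hE
        obtain ⟨E₁, hE₁, h1⟩ := hrefπ E hE
        obtain ⟨E₀, hE₀, h0⟩ := href E₁ hE₁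
        exact ⟨E₀, hE₀, h1.trans h0⟩
      have habsG : ∀ A ∈ σ, |Gp A| = Fabs A - f A ⟨π, hπ⟩ := by
        intro A hA
        have hAC : A ∈ C := hσ.1 A hA
        exact abs_of_nonneg (sub_nonneg.mpr (hge A hAC ⟨π, hπ⟩))
      have hsum : ∑ A ∈ σ, |Gp A| = Fabs univ - f univ τ := by
        rw [Finset.sum_congr rfl habsG, Finset.sum_sub_distrib]
        congr 1
        · exact hFabs_sum ⟨σ, hσ⟩
        · have habs0 : |F (∅ : Set Ω)| = 0 := by rw [hFadd.1, abs_zero]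
          have h1 : f univ τ = ∑ B ∈ τfin, |F B| := by
            rw [hfu τ]
          rw [h1, hτfin, sumImageZero _ _ hpd (fun B => |F B|) habs0, Finset.sum_product]
      rw [hsum]
      exact hπ₀ τ hτge
    have hle2 : ba0Norm C Gp ≤ ε / 2 :=
      Real.sSup_le (fun x hx => (hval x hx).le) (by linarith)
    calc ba0Norm C Gp ≤ ε / 2 := hle2
      _ < ε := by linarith
  exact ⟨Fabs, ⟨hFabsAddV, hbddFabs⟩,
    fun A hA => (le_abs_self _).trans (habsle A hA),
    fun A hA => (neg_le_abs _).trans (habsle A hA),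
    hmin, heps, hnormFabs.trans hnormF.symm⟩
end
end
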